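/- arXiv:2012.09116 — 6 statements merged into one kernel-verified Lean document; each statement's English description precedes it below -/
import Mathlib

section
/- Fix k ∈ ℕ, ε > 0, T ∈ ℝ, a type Ω of datasets with a symmetric neighboring relation, and queries g_1,…,g_k : Ω → ℝ each of sensitivity at most 1. The mechanism that on input X outputs the result of AboveThreshold with parameter ε and threshold T applied to the values g_1(X),…,g_k(X) is ε-DP, i.e. (ε,0)-DP. -/
open MeasureTheory

/-- `(ε, δ)`-differential privacy of a mechanism `M : Ω → Measure α` with respect to a
neighboring relation `N`. -/
def IsDP {Ω : Type} {α : Type*} [MeasurableSpace α] (N : Ω → Ω → Prop)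
    (M : Ω → Measure α) (ε δ : ℝ) : Prop :=
  ∀ X X', N X X' → ∀ S : Set α, MeasurableSet S →
    M X S ≤ ENNReal.ofReal (Real.exp ε) * M X' S + ENNReal.ofReal δ

/-- The Laplace distribution on `ℝ` with scale `b`, given by the density
`x ↦ (1/(2b))·exp(-|x|/b)` with respect to Lebesgue measure. -/
noncomputable def laplace (b : ℝ) : Measure ℝ :=
  volume.withDensity fun x => ENNReal.ofReal (1 / (2 * b) * Real.exp (-|x| / b))

/-- The output space of `AboveThreshold` is `WithTop (Fin k)`, where `⊤` is the designated
failure symbol; since it is (countable) discrete, every set is measurable. -/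
instance (priority := low) {α : Type*} : MeasurableSpace (WithTop α) := ⊤

/-- The `AboveThreshold` mechanism with privacy parameter `ε` and threshold `T` on real
inputs `x 1, …, x k`: sample `ρ ~ Lap(2/ε)` and independent `ν i ~ Lap(4/ε)` and output the
smallest index `i` with `x i + ν i ≥ T + ρ` (`⊤` if no such index exists). -/
noncomputable def aboveThreshold {k : ℕ} (ε T : ℝ) (x : Fin k → ℝ) :
    Measure (WithTop (Fin k)) :=
  ((laplace (2 / ε)).prod (Measure.pi fun _ : Fin k => laplace (4 / ε))).map
    fun p => (Finset.univ.filter fun i : Fin k => T + p.1 ≤ x i + p.2 i).min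

open ENNReal

namespace AT

noncomputable def dens (b : ℝ) (x : ℝ) : ℝ≥0∞ :=
  ENNReal.ofReal (1 / (2 * b) * Real.exp (-|x| / b))

lemma measurable_dens (b : ℝ) : Measurable (dens b) := by
  apply Measurable.ennreal_ofReal; fun_prop

lemma laplace_eq (b : ℝ) : laplace b = volume.withDensity (dens b) := rfl

instance (b : ℝ) : SigmaFinite (laplace b) := by
  unfold laplace; infer_instance

lemma dens_shift {b : ℝ} (hb : 0 < b) (c y : ℝ) :
    dens b (y - c) ≤ ENNReal.ofReal (Real.exp (|c| / b)) * dens b y := by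
  simp only [dens]
  rw [← ENNReal.ofReal_mul (Real.exp_nonneg _)]
  apply ENNReal.ofReal_le_ofReal
  rw [show Real.exp (|c|/b) * (1/(2*b) * Real.exp (-|y|/b))
      = 1/(2*b) * (Real.exp (|c|/b) * Real.exp (-|y|/b)) by ring, ← Real.exp_add]
  have h2b : (0:ℝ) ≤ 1/(2*b) := by positivity
  refine mul_le_mul_of_nonneg_left ?_ h2b
  apply Real.exp_le_exp.mpr
  have h := abs_sub_abs_le_abs_sub y (y - c)
  have h2 : y - (y - c) = c := by ring
  rw [h2] at h
  rw [← add_div]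
  have h3 : -|y - c| ≤ |c| + -|y| := by linarith
  exact div_le_div_of_nonneg_right h3 hb.le

lemma lintegral_laplace_shift {b : ℝ} (hb : 0 < b) (c : ℝ) {g : ℝ → ℝ≥0∞}
    (hg : Measurable g) :
    ∫⁻ x, g (x + c) ∂laplace b
      ≤ ENNReal.ofReal (Real.exp (|c| / b)) * ∫⁻ x, g x ∂laplace b := by
  rw [laplace_eq,
    lintegral_withDensity_eq_lintegral_mul _ (measurable_dens b)
      (show Measurable fun x : ℝ => g (x+c) from hg.comp (measurable_add_const c)),
    lintegral_withDensity_eq_lintegral_mul _ (measurable_dens b) hg]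
  have hmp : MeasurePreserving (fun x : ℝ => x + c) volume volume :=
    measurePreserving_add_right volume c
  have hmeas : Measurable fun y : ℝ => dens b (y - c) * g y :=
    ((measurable_dens b).comp (measurable_id.sub measurable_const)).mul hg
  have h1 : ∫⁻ x, (dens b * fun x => g (x + c)) x ∂volume
      = ∫⁻ y, dens b (y - c) * g y ∂volume := by
    calc ∫⁻ x, (dens b * fun x => g (x + c)) x ∂volume
        = ∫⁻ x, (fun y => dens b (y - c) * g y) (x + c) ∂volume := by
          apply lintegral_congr; intro x
          simp [Pi.mul_apply, add_sub_cancel_right]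
      _ = ∫⁻ y, dens b (y - c) * g y ∂volume := hmp.lintegral_comp hmeas
  rw [h1]
  calc ∫⁻ y, dens b (y - c) * g y ∂volume
      ≤ ∫⁻ y, ENNReal.ofReal (Real.exp (|c| / b)) * (dens b y * g y) ∂volume := by
        apply lintegral_mono; intro y
        simp only []
        rw [← mul_assoc]
        exact mul_le_mul_left (dens_shift hb c y) _
    _ = ENNReal.ofReal (Real.exp (|c| / b)) * ∫⁻ y, (dens b * g) y ∂volume := by
        exact lintegral_const_mul _ ((measurable_dens b).mul hg)

lemma measurable_upd {k : ℕ} (i : Fin k) (c : ℝ) :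
    Measurable fun ν : Fin k → ℝ => Function.update ν i (ν i + c) := by
  apply measurable_pi_lambda
  intro j
  simp only [Function.update_apply]
  by_cases h : j = i
  · simp only [h, if_pos rfl]
    exact Measurable.add_const (measurable_pi_apply (X := fun _ : Fin k => ℝ) i) c
  · simp only [if_neg h]
    exact measurable_pi_apply j

lemma lintegral_pi_laplace_shift {k : ℕ} {b : ℝ} (hb : 0 < b) (c : ℝ) (i : Fin k)
    {f : (Fin k → ℝ) → ℝ≥0∞} (hf : Measurable f) :
    ∫⁻ ν, f (Function.update ν i (ν i + c)) ∂(Measure.pi fun _ : Fin k => laplace b)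
      ≤ ENNReal.ofReal (Real.exp (|c| / b))
        * ∫⁻ ν, f ν ∂(Measure.pi fun _ : Fin k => laplace b) := by
  classical
  set μ : Fin k → Measure ℝ := fun _ => laplace b with hμ
  have hfτ : Measurable fun ν : Fin k → ℝ => f (Function.update ν i (ν i + c)) :=
    hf.comp (measurable_upd i c)
  set x0 : Fin k → ℝ := fun _ => 0 with hx0
  set s : Finset (Fin k) := Finset.univ.erase i with hs
  have hGmeas : Measurable fun t : ℝ => (∫⋯∫⁻_s, f ∂μ) (Function.update x0 i t) :=
    (Measurable.lmarginal μ hf).comp (measurable_update x0)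
  have hkey : ∀ t : ℝ,
      (∫⋯∫⁻_s, (fun ν => f (Function.update ν i (ν i + c))) ∂μ) (Function.update x0 i t)
        = (∫⋯∫⁻_s, f ∂μ) (Function.update x0 i (t + c)) := by
    intro t
    rw [lmarginal_update_of_notMem (μ := μ) hfτ (Finset.notMem_erase i _) x0 t,
        lmarginal_update_of_notMem (μ := μ) hf (Finset.notMem_erase i _) x0 (t + c)]
    congr 1
    funext z
    simp [Function.update_self, Function.update_idem]
  calc ∫⁻ ν, f (Function.update ν i (ν i + c)) ∂(Measure.pi μ)
      = (∫⋯∫⁻_Finset.univ, (fun ν => f (Function.update ν i (ν i + c))) ∂μ) x0 :=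
        lintegral_eq_lmarginal_univ x0
    _ = ∫⁻ t, (∫⋯∫⁻_s, (fun ν => f (Function.update ν i (ν i + c))) ∂μ)
          (Function.update x0 i t) ∂μ i :=
        lmarginal_erase _ hfτ (Finset.mem_univ i) x0
    _ = ∫⁻ t, (∫⋯∫⁻_s, f ∂μ) (Function.update x0 i (t + c)) ∂laplace b := by
        apply lintegral_congr; intro t; exact hkey t
    _ ≤ ENNReal.ofReal (Real.exp (|c| / b))
          * ∫⁻ t, (∫⋯∫⁻_s, f ∂μ) (Function.update x0 i t) ∂laplace b :=
        lintegral_laplace_shift hb c hGmeas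
    _ = ENNReal.ofReal (Real.exp (|c| / b)) * ∫⁻ ν, f ν ∂(Measure.pi μ) := by
        congr 1
        rw [show (laplace b) = μ i from rfl, ← lmarginal_erase _ hf (Finset.mem_univ i) x0,
          ← lintegral_eq_lmarginal_univ (μ := μ) x0]

section Prod

variable {k : ℕ} {b1 b2 : ℝ}


lemma lintegral_prod_shift_fst (hb1 : 0 < b1) (a : ℝ)
    {f : ℝ × (Fin k → ℝ) → ℝ≥0∞} (hf : Measurable f) :
    ∫⁻ p, f (p.1 + a, p.2) ∂((laplace b1).prod (Measure.pi fun _ : Fin k => laplace b2))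
      ≤ ENNReal.ofReal (Real.exp (|a| / b1)) * ∫⁻ p, f p ∂((laplace b1).prod (Measure.pi fun _ : Fin k => laplace b2)) := by
  have hF : Measurable fun p : ℝ × (Fin k → ℝ) => f (p.1 + a, p.2) :=
    hf.comp ((measurable_fst.add_const a).prodMk measurable_snd)
  rw [lintegral_prod _ hF.aemeasurable, lintegral_prod _ hf.aemeasurable]
  have hH : Measurable fun x : ℝ => ∫⁻ y, f (x, y) ∂(Measure.pi fun _ : Fin k => laplace b2) :=
    hf.lintegral_prod_right'
  exact lintegral_laplace_shift hb1 a hH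

lemma lintegral_prod_shift (hb1 : 0 < b1) (hb2 : 0 < b2) (a c : ℝ) (i : Fin k)
    {f : ℝ × (Fin k → ℝ) → ℝ≥0∞} (hf : Measurable f) :
    ∫⁻ p, f (p.1 + a, Function.update p.2 i (p.2 i + c)) ∂((laplace b1).prod (Measure.pi fun _ : Fin k => laplace b2))
      ≤ ENNReal.ofReal (Real.exp (|a| / b1))
        * (ENNReal.ofReal (Real.exp (|c| / b2)) * ∫⁻ p, f p ∂((laplace b1).prod (Measure.pi fun _ : Fin k => laplace b2))) := by
  have hg : Measurable fun q : ℝ × (Fin k → ℝ) => f (q.1, Function.update q.2 i (q.2 i + c)) :=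
    hf.comp (measurable_fst.prodMk ((measurable_upd i c).comp measurable_snd))
  have step1 := lintegral_prod_shift_fst (b2 := b2) hb1 a hg
  have hH : Measurable fun x : ℝ => ∫⁻ y, f (x, y) ∂(Measure.pi fun _ : Fin k => laplace b2) := hf.lintegral_prod_right'
  have step2 : ∫⁻ q, f (q.1, Function.update q.2 i (q.2 i + c)) ∂((laplace b1).prod (Measure.pi fun _ : Fin k => laplace b2))
      ≤ ENNReal.ofReal (Real.exp (|c| / b2)) * ∫⁻ p, f p ∂((laplace b1).prod (Measure.pi fun _ : Fin k => laplace b2)) := by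
    rw [lintegral_prod _ hg.aemeasurable, lintegral_prod _ hf.aemeasurable]
    calc ∫⁻ x, ∫⁻ y, f (x, Function.update y i (y i + c)) ∂(Measure.pi fun _ : Fin k => laplace b2) ∂laplace b1
        ≤ ∫⁻ x, ENNReal.ofReal (Real.exp (|c| / b2)) * ∫⁻ y, f (x, y) ∂(Measure.pi fun _ : Fin k => laplace b2) ∂laplace b1 := by
          apply lintegral_mono; intro x
          exact lintegral_pi_laplace_shift hb2 c i (hf.comp measurable_prodMk_left)
      _ = ENNReal.ofReal (Real.exp (|c| / b2)) * ∫⁻ x, ∫⁻ y, f (x, y) ∂(Measure.pi fun _ : Fin k => laplace b2) ∂laplace b1 :=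
          lintegral_const_mul _ hH
  exact step1.trans (mul_le_mul_right step2 _)

lemma measure_shift_le (hb1 : 0 < b1) (hb2 : 0 < b2) (a c : ℝ) (i : Fin k)
    {E E' : Set (ℝ × (Fin k → ℝ))} (hE' : MeasurableSet E')
    (hsub : ∀ p ∈ E, (p.1 + a, Function.update p.2 i (p.2 i + c)) ∈ E') :
    ((laplace b1).prod (Measure.pi fun _ : Fin k => laplace b2)) E ≤ ENNReal.ofReal (Real.exp (|a| / b1))
        * (ENNReal.ofReal (Real.exp (|c| / b2)) * ((laplace b1).prod (Measure.pi fun _ : Fin k => laplace b2)) E') := by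
  set τ : ℝ × (Fin k → ℝ) → ℝ × (Fin k → ℝ) :=
    fun p => (p.1 + a, Function.update p.2 i (p.2 i + c)) with hτdef
  have hτ : Measurable τ :=
    (measurable_fst.add_const a).prodMk ((measurable_upd i c).comp measurable_snd)
  have hind : Measurable (E'.indicator (1 : ℝ × (Fin k → ℝ) → ℝ≥0∞)) := measurable_one.indicator hE'
  calc ((laplace b1).prod (Measure.pi fun _ : Fin k => laplace b2)) E ≤ ((laplace b1).prod (Measure.pi fun _ : Fin k => laplace b2)) (τ ⁻¹' E') := measure_mono hsub
    _ = ∫⁻ p, E'.indicator (1 : ℝ × (Fin k → ℝ) → ℝ≥0∞) (τ p) ∂((laplace b1).prod (Measure.pi fun _ : Fin k => laplace b2)) := by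
        rw [← lintegral_indicator_one (hτ hE')]
        apply lintegral_congr; intro p
        by_cases h : τ p ∈ E' <;> simp [Set.indicator_apply, Set.mem_preimage, h]
    _ ≤ ENNReal.ofReal (Real.exp (|a| / b1))
        * (ENNReal.ofReal (Real.exp (|c| / b2))
          * ∫⁻ p, E'.indicator (1 : ℝ × (Fin k → ℝ) → ℝ≥0∞) p ∂((laplace b1).prod (Measure.pi fun _ : Fin k => laplace b2))) :=
        lintegral_prod_shift hb1 hb2 a c i hind
    _ = ENNReal.ofReal (Real.exp (|a| / b1))
        * (ENNReal.ofReal (Real.exp (|c| / b2)) * ((laplace b1).prod (Measure.pi fun _ : Fin k => laplace b2)) E') := by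
        rw [lintegral_indicator_one hE']

lemma measure_shift_le_fst (hb1 : 0 < b1) (a : ℝ)
    {E E' : Set (ℝ × (Fin k → ℝ))} (hE' : MeasurableSet E')
    (hsub : ∀ p ∈ E, (p.1 + a, p.2) ∈ E') :
    ((laplace b1).prod (Measure.pi fun _ : Fin k => laplace b2)) E ≤ ENNReal.ofReal (Real.exp (|a| / b1)) * ((laplace b1).prod (Measure.pi fun _ : Fin k => laplace b2)) E' := by
  set τ : ℝ × (Fin k → ℝ) → ℝ × (Fin k → ℝ) := fun p => (p.1 + a, p.2) with hτdef
  have hτ : Measurable τ := (measurable_fst.add_const a).prodMk measurable_snd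
  have hind : Measurable (E'.indicator (1 : ℝ × (Fin k → ℝ) → ℝ≥0∞)) := measurable_one.indicator hE'
  calc ((laplace b1).prod (Measure.pi fun _ : Fin k => laplace b2)) E ≤ ((laplace b1).prod (Measure.pi fun _ : Fin k => laplace b2)) (τ ⁻¹' E') := measure_mono hsub
    _ = ∫⁻ p, E'.indicator (1 : ℝ × (Fin k → ℝ) → ℝ≥0∞) (τ p) ∂((laplace b1).prod (Measure.pi fun _ : Fin k => laplace b2)) := by
        rw [← lintegral_indicator_one (hτ hE')]
        apply lintegral_congr; intro p
        by_cases h : τ p ∈ E' <;> simp [Set.indicator_apply, Set.mem_preimage, h]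
    _ ≤ ENNReal.ofReal (Real.exp (|a| / b1))
          * ∫⁻ p, E'.indicator (1 : ℝ × (Fin k → ℝ) → ℝ≥0∞) p ∂((laplace b1).prod (Measure.pi fun _ : Fin k => laplace b2)) :=
        lintegral_prod_shift_fst hb1 a hind
    _ = ENNReal.ofReal (Real.exp (|a| / b1)) * ((laplace b1).prod (Measure.pi fun _ : Fin k => laplace b2)) E' := by
        rw [lintegral_indicator_one hE']

end Prod


section Events

variable {k : ℕ}

noncomputable def Fmin (T : ℝ) (x : Fin k → ℝ) (p : ℝ × (Fin k → ℝ)) : WithTop (Fin k) :=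
  (Finset.univ.filter fun i : Fin k => T + p.1 ≤ x i + p.2 i).min

lemma Fmin_eq_top_iff (T : ℝ) (x : Fin k → ℝ) (p : ℝ × (Fin k → ℝ)) :
    Fmin T x p = ⊤ ↔ ∀ j, x j + p.2 j < T + p.1 := by
  rw [Fmin, Finset.min_eq_top, Finset.filter_eq_empty_iff]
  constructor
  · intro h j; exact lt_of_not_ge (h (Finset.mem_univ j))
  · intro h j _; exact not_le.mpr (h j)

lemma Fmin_eq_coe_iff (T : ℝ) (x : Fin k → ℝ) (p : ℝ × (Fin k → ℝ)) (i : Fin k) :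
    Fmin T x p = (i : WithTop (Fin k))
      ↔ (T + p.1 ≤ x i + p.2 i ∧ ∀ j, j < i → x j + p.2 j < T + p.1) := by
  constructor
  · intro h
    have hi := Finset.mem_of_min h
    rw [Finset.mem_filter] at hi
    refine ⟨hi.2, fun j hj => ?_⟩
    by_contra hc
    push_neg at hc
    have hjmem : j ∈ Finset.univ.filter fun i : Fin k => T + p.1 ≤ x i + p.2 i :=
      Finset.mem_filter.mpr ⟨Finset.mem_univ j, hc⟩
    have hle := Finset.min_le hjmem
    rw [show (Finset.univ.filter fun i : Fin k => T + p.1 ≤ x i + p.2 i).min = (i : WithTop (Fin k)) from h] at hle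
    exact absurd (WithTop.coe_le_coe.mp hle) (not_le.mpr hj)
  · rintro ⟨h1, h2⟩
    refine le_antisymm (Finset.min_le (Finset.mem_filter.mpr ⟨Finset.mem_univ i, h1⟩)) ?_
    refine Finset.le_min fun j hj => ?_
    rw [Finset.mem_filter] at hj
    refine WithTop.coe_le_coe.mpr (le_of_not_gt fun hji => ?_)
    exact absurd hj.2 (not_le.mpr (h2 j hji))

lemma measurableSet_Fmin_top (T : ℝ) (x : Fin k → ℝ) :
    MeasurableSet (Fmin T x ⁻¹' {⊤}) := by
  have h : Fmin T x ⁻¹' {⊤} = ⋂ j, {p : ℝ × (Fin k → ℝ) | x j + p.2 j < T + p.1} := by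
    ext p
    simp only [Set.mem_preimage, Set.mem_singleton_iff, Fmin_eq_top_iff, Set.mem_iInter,
      Set.mem_setOf_eq]
  rw [h]
  exact MeasurableSet.iInter fun j => measurableSet_lt (by fun_prop) (by fun_prop)

lemma measurableSet_Fmin_coe (T : ℝ) (x : Fin k → ℝ) (i : Fin k) :
    MeasurableSet (Fmin T x ⁻¹' {(i : WithTop (Fin k))}) := by
  have h : Fmin T x ⁻¹' {(i : WithTop (Fin k))}
      = {p : ℝ × (Fin k → ℝ) | T + p.1 ≤ x i + p.2 i}
        ∩ ⋂ j, ⋂ (_ : j < i), {p : ℝ × (Fin k → ℝ) | x j + p.2 j < T + p.1} := by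
    ext p
    simp only [Set.mem_preimage, Set.mem_singleton_iff, Fmin_eq_coe_iff, Set.mem_inter_iff,
      Set.mem_setOf_eq, Set.mem_iInter]
  rw [h]
  refine MeasurableSet.inter (measurableSet_le (by fun_prop) (by fun_prop)) ?_
  exact MeasurableSet.iInter fun j => MeasurableSet.iInter fun _ =>
    measurableSet_lt (by fun_prop) (by fun_prop)

lemma measurableSet_Fmin_singleton (T : ℝ) (x : Fin k → ℝ) (o : WithTop (Fin k)) :
    MeasurableSet (Fmin T x ⁻¹' {o}) := by
  cases o with
  | top => exact measurableSet_Fmin_top T x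
  | coe i => exact measurableSet_Fmin_coe T x i

instance : Countable (WithTop (Fin k)) := by unfold WithTop; infer_instance

lemma measurable_Fmin (T : ℝ) (x : Fin k → ℝ) : Measurable (Fmin T x) := by
  intro S _
  have h : Fmin T x ⁻¹' S = ⋃ o ∈ S, Fmin T x ⁻¹' {o} := by
    ext p; simp
  rw [h]
  exact MeasurableSet.biUnion (Set.to_countable S)
    (fun o _ => measurableSet_Fmin_singleton T x o)

end Events

end AT

/-- The `AboveThreshold` mechanism applied to `k` queries of sensitivity at most one
is `ε`-DP. -/
theorem aboveThreshold_is_DP (k : ℕ) (ε : ℝ) (hε : 0 < ε) (T : ℝ)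
    (Ω : Type) (N : Ω → Ω → Prop) (hsym : ∀ X X', N X X' → N X' X)
    (g : Fin k → Ω → ℝ) (hg : ∀ i X X', N X X' → |g i X - g i X'| ≤ 1) :
    IsDP N (fun X => aboveThreshold ε T fun i => g i X) ε 0 := by
  intro X X' hN S hS
  have hb1 : (0:ℝ) < 2 / ε := by positivity
  have hb2 : (0:ℝ) < 4 / ε := by positivity
  set x : Fin k → ℝ := fun i => g i X with hxdef
  set x' : Fin k → ℝ := fun i => g i X' with hx'def
  have hsens : ∀ j, |x j - x' j| ≤ 1 := fun j => hg j X X' hN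
  have habove : ∀ y : Fin k → ℝ, aboveThreshold ε T y
      = ((laplace (2 / ε)).prod (Measure.pi fun _ : Fin k => laplace (4 / ε))).map
          (AT.Fmin T y) := fun y => rfl
  set μ := (laplace (2 / ε)).prod (Measure.pi fun _ : Fin k => laplace (4 / ε)) with hμ
  have key : ∀ o : WithTop (Fin k),
      μ (AT.Fmin T x ⁻¹' {o}) ≤ ENNReal.ofReal (Real.exp ε) * μ (AT.Fmin T x' ⁻¹' {o}) := by
    intro o
    cases o with
    | top =>
      have hsub : ∀ p ∈ AT.Fmin T x ⁻¹' {(⊤ : WithTop (Fin k))},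
          ((p.1 + 1, p.2) : ℝ × (Fin k → ℝ)) ∈ AT.Fmin T x' ⁻¹' {(⊤ : WithTop (Fin k))} := by
        intro p hp
        simp only [Set.mem_preimage, Set.mem_singleton_iff, AT.Fmin_eq_top_iff] at hp ⊢
        intro j
        have h1 := abs_le.mp (hsens j)
        have h2 := hp j
        have h1a : x j - x' j ≤ 1 := h1.2
        have h1b : -(1:ℝ) ≤ x j - x' j := h1.1
        linarith
      have hb := AT.measure_shift_le_fst (b2 := 4/ε) hb1 1
        (AT.measurableSet_Fmin_top T x') hsub
      refine hb.trans (mul_le_mul_left (ENNReal.ofReal_le_ofReal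
        (Real.exp_le_exp.mpr ?_)) _)
      rw [abs_one, one_div_div]
      linarith
    | coe i =>
      have hsub : ∀ p ∈ AT.Fmin T x ⁻¹' {(i : WithTop (Fin k))},
          ((p.1 + 1, Function.update p.2 i (p.2 i + 2)) : ℝ × (Fin k → ℝ))
            ∈ AT.Fmin T x' ⁻¹' {(i : WithTop (Fin k))} := by
        intro p hp
        simp only [Set.mem_preimage, Set.mem_singleton_iff, AT.Fmin_eq_coe_iff] at hp ⊢
        obtain ⟨h1, h2⟩ := hp
        constructor
        · rw [Function.update_self]
          have ha := abs_le.mp (hsens i)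
          have ha1 : x i - x' i ≤ 1 := ha.2
          linarith
        · intro j hj
          rw [Function.update_of_ne (ne_of_lt hj)]
          have ha := abs_le.mp (hsens j)
          have ha1 : -(1:ℝ) ≤ x j - x' j := ha.1
          have hb := h2 j hj
          linarith
      have hb := AT.measure_shift_le hb1 hb2 1 2 i (AT.measurableSet_Fmin_coe T x' i) hsub
      refine hb.trans_eq ?_
      rw [← mul_assoc, ← ENNReal.ofReal_mul (Real.exp_nonneg _), ← Real.exp_add]
      congr 2
      rw [abs_one, abs_two]
      field_simp
      ring
  have hdis : ∀ y : Fin k → ℝ,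
      S.PairwiseDisjoint (fun o : WithTop (Fin k) => AT.Fmin T y ⁻¹' {o}) := by
    intro y o _ o' _ hne
    refine Set.disjoint_left.mpr fun p hp hp' => hne ?_
    rw [Set.mem_preimage, Set.mem_singleton_iff] at hp hp'
    rw [← hp, ← hp']
  have hmeasS : ∀ y : Fin k → ℝ, μ (AT.Fmin T y ⁻¹' S)
      = ∑' o : S, μ (AT.Fmin T y ⁻¹' {(o : WithTop (Fin k))}) := by
    intro y
    have hdecomp : AT.Fmin T y ⁻¹' S = ⋃ o ∈ S, AT.Fmin T y ⁻¹' {o} := by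
      ext p; simp
    rw [hdecomp]
    exact measure_biUnion (Set.to_countable S) (hdis y)
      (fun o _ => AT.measurableSet_Fmin_singleton T y o)
  calc (aboveThreshold ε T x) S
      = μ (AT.Fmin T x ⁻¹' S) := by
        rw [habove x, Measure.map_apply (AT.measurable_Fmin T x) hS]
    _ = ∑' o : S, μ (AT.Fmin T x ⁻¹' {(o : WithTop (Fin k))}) := hmeasS x
    _ ≤ ∑' o : S, ENNReal.ofReal (Real.exp ε) * μ (AT.Fmin T x' ⁻¹' {(o : WithTop (Fin k))}) :=
        ENNReal.tsum_le_tsum fun o => key o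
    _ = ENNReal.ofReal (Real.exp ε) * ∑' o : S, μ (AT.Fmin T x' ⁻¹' {(o : WithTop (Fin k))}) :=
        ENNReal.tsum_mul_left
    _ = ENNReal.ofReal (Real.exp ε) * (aboveThreshold ε T x') S + ENNReal.ofReal 0 := by
        rw [← hmeasS x', habove x', Measure.map_apply (AT.measurable_Fmin T x') hS]
        simp
end

section
/- Fix k ∈ ℕ, ε > 0, T ∈ ℝ, a type Ω of datasets with a symmetric neighboring relation, and queries f_1,…,f_k : Ω → ℝ each of sensitivity at most 1. The mechanism that on input X outputs the result of PermutedAboveThreshold with parameter ε and threshold T applied to the values f_1(X),…,f_k(X) is ε-DP, i.e. (ε,0)-DP. -/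
open MeasureTheory

/-- Permutations form a (finite) discrete measurable space. -/
instance (priority := low) {α : Type*} : MeasurableSpace (Equiv.Perm α) := ⊤

/-- The `PermutedAboveThreshold` mechanism with privacy parameter `ε` and threshold `T`:
sample a uniformly random permutation `π` of `Fin k` (independent of everything else),
run `AboveThreshold` on `x (π 1), …, x (π k)` to obtain an index `i`, and return
`π⁻¹ i` (returning the failure symbol `⊤` if `AboveThreshold` fails). -/
noncomputable def permutedAboveThreshold {k : ℕ} (ε T : ℝ) (x : Fin k → ℝ) :
    Measure (WithTop (Fin k)) :=
  ((PMF.uniformOfFintype (Equiv.Perm (Fin k))).toMeasure).bind fun π =>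
    (aboveThreshold ε T fun j => x (π j)).map (WithTop.map fun i => π.symm i)

namespace DPaux

open Real ENNReal

noncomputable def lapDens (b x : ℝ) : ℝ≥0∞ := ENNReal.ofReal (1 / (2 * b) * Real.exp (-|x| / b))

lemma laplace_eq (b : ℝ) : laplace b = volume.withDensity (lapDens b) := rfl

lemma measurable_lapDens (b : ℝ) : Measurable (lapDens b) := by
  unfold lapDens; fun_prop

instance (b : ℝ) : SigmaFinite (laplace b) := by
  unfold laplace; infer_instance

lemma lapDens_shift {b : ℝ} (hb : 0 < b) (s x : ℝ) :
    lapDens b (x + s) ≤ ENNReal.ofReal (Real.exp (|s| / b)) * lapDens b x := by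
  unfold lapDens
  rw [← ENNReal.ofReal_mul (Real.exp_nonneg _)]
  apply ENNReal.ofReal_le_ofReal
  have h1 : 0 ≤ 1 / (2 * b) := by positivity
  have h2 : Real.exp (-|x + s| / b) ≤ Real.exp (|s| / b) * Real.exp (-|x| / b) := by
    rw [← Real.exp_add, Real.exp_le_exp]
    have : |x| ≤ |x + s| + |s| := by
      calc |x| = |(x + s) + (-s)| := by ring_nf
        _ ≤ |x + s| + |-s| := abs_add_le _ _
        _ = |x + s| + |s| := by rw [abs_neg]
    rw [← add_div, div_le_div_iff₀ hb hb]
    nlinarith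
  calc 1 / (2 * b) * Real.exp (-|x + s| / b)
      ≤ 1 / (2 * b) * (Real.exp (|s| / b) * Real.exp (-|x| / b)) :=
        mul_le_mul_of_nonneg_left h2 h1
    _ = Real.exp (|s| / b) * (1 / (2 * b) * Real.exp (-|x| / b)) := by ring

lemma lap_lintegral_shift {b : ℝ} (hb : 0 < b) (s : ℝ) {g : ℝ → ℝ≥0∞} (hg : Measurable g) :
    ∫⁻ x, g x ∂laplace b ≤ ENNReal.ofReal (Real.exp (|s| / b)) * ∫⁻ x, g (x + s) ∂laplace b := by
  have hgs : Measurable fun x => g (x + s) := hg.comp (measurable_add_const s)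
  rw [laplace_eq, lintegral_withDensity_eq_lintegral_mul _ (measurable_lapDens b) hg,
    lintegral_withDensity_eq_lintegral_mul _ (measurable_lapDens b) hgs]
  calc ∫⁻ x, (lapDens b * g) x ∂volume
      = ∫⁻ x, (lapDens b * g) (x + s) ∂volume := (lintegral_add_right_eq_self _ s).symm
    _ ≤ ∫⁻ x, ENNReal.ofReal (Real.exp (|s| / b)) * ((lapDens b * fun x => g (x + s)) x) ∂volume := by
        apply lintegral_mono; intro x
        simp only [Pi.mul_apply]
        calc lapDens b (x + s) * g (x + s)
            ≤ (ENNReal.ofReal (Real.exp (|s| / b)) * lapDens b x) * g (x + s) :=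
              mul_le_mul_left (lapDens_shift hb s x) _
          _ = ENNReal.ofReal (Real.exp (|s| / b)) * (lapDens b x * g (x + s)) := mul_assoc _ _ _
    _ = ENNReal.ofReal (Real.exp (|s| / b)) * ∫⁻ x, (lapDens b * fun x => g (x + s)) x ∂volume :=
        lintegral_const_mul' _ _ ENNReal.ofReal_ne_top

lemma prod_left_shift {β : Type*} [MeasurableSpace β] (μ₁ : Measure ℝ) (μ₂ : Measure β)
    [SFinite μ₂] (c : ℝ≥0∞) (s : ℝ)
    (hshift : ∀ {g : ℝ → ℝ≥0∞}, Measurable g →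
      ∫⁻ x, g x ∂μ₁ ≤ c * ∫⁻ x, g (x + s) ∂μ₁)
    {E : Set (ℝ × β)} (hE : MeasurableSet E) :
    (μ₁.prod μ₂) E ≤ c * (μ₁.prod μ₂) {p | (p.1 + s, p.2) ∈ E} := by
  have hE' : MeasurableSet {p : ℝ × β | (p.1 + s, p.2) ∈ E} :=
    (measurable_fst.add_const s).prodMk measurable_snd hE
  rw [Measure.prod_apply hE, Measure.prod_apply hE']
  exact hshift (measurable_measure_prodMk_left hE)

lemma prod_right_shift {β : Type*} [MeasurableSpace β] (μ₁ : Measure ℝ) (μ₂ : Measure β)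
    [SFinite μ₂] (c : ℝ≥0∞) (hc : c ≠ ∞) (τ : β → β) (hτ : Measurable τ)
    (h : ∀ A : Set β, MeasurableSet A → μ₂ A ≤ c * μ₂ (τ ⁻¹' A))
    {E : Set (ℝ × β)} (hE : MeasurableSet E) :
    (μ₁.prod μ₂) E ≤ c * (μ₁.prod μ₂) {p | (p.1, τ p.2) ∈ E} := by
  have hE' : MeasurableSet {p : ℝ × β | (p.1, τ p.2) ∈ E} :=
    (measurable_fst.prodMk (hτ.comp measurable_snd)) hE
  rw [Measure.prod_apply hE, Measure.prod_apply hE']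
  calc ∫⁻ x, μ₂ (Prod.mk x ⁻¹' E) ∂μ₁
      ≤ ∫⁻ x, c * μ₂ (τ ⁻¹' (Prod.mk x ⁻¹' E)) ∂μ₁ :=
        lintegral_mono fun x => h _ (measurable_prodMk_left hE)
    _ = c * ∫⁻ x, μ₂ (τ ⁻¹' (Prod.mk x ⁻¹' E)) ∂μ₁ := lintegral_const_mul' _ _ hc
    _ = c * ∫⁻ x, μ₂ (Prod.mk x ⁻¹' {p : ℝ × β | (p.1, τ p.2) ∈ E}) ∂μ₁ := rfl

lemma measurable_update_shift {k : ℕ} (i : Fin k) (s : ℝ) :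
    Measurable fun ν : Fin k → ℝ => Function.update ν i (ν i + s) := by
  have hcoord : Measurable fun ν : Fin k → ℝ => ν i + s :=
    by fun_prop
  exact measurable_update'.comp (measurable_id.prodMk hcoord)

lemma pi_shift {k : ℕ} (μ : Measure ℝ) [SigmaFinite μ] (c : ℝ≥0∞) (s : ℝ)
    (hshift : ∀ {g : ℝ → ℝ≥0∞}, Measurable g →
      ∫⁻ x, g x ∂μ ≤ c * ∫⁻ x, g (x + s) ∂μ)
    (i : Fin k) {A : Set (Fin k → ℝ)} (hA : MeasurableSet A) :
    (Measure.pi fun _ : Fin k => μ) A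
      ≤ c * (Measure.pi fun _ : Fin k => μ) {ν | Function.update ν i (ν i + s) ∈ A} := by
  have hk : 0 < k := i.pos
  obtain ⟨n, rfl⟩ : ∃ n, k = n + 1 := ⟨k - 1, by omega⟩
  set e := MeasurableEquiv.piFinSuccAbove (fun _ : Fin (n + 1) => ℝ) i with he
  have hmp := measurePreserving_piFinSuccAbove (fun _ : Fin (n + 1) => μ) i
  have key : ∀ (B : Set (Fin (n + 1) → ℝ)), MeasurableSet B →
      (Measure.pi fun _ : Fin (n + 1) => μ) B
        = ((μ).prod (Measure.pi fun _ : Fin n => μ)) (e.symm ⁻¹' B) := by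
    intro B hB
    rw [← hmp.map_eq, Measure.map_apply e.measurable (e.symm.measurable hB),
      Set.preimage_preimage]
    simp
  have hA' : MeasurableSet {ν : Fin (n + 1) → ℝ | Function.update ν i (ν i + s) ∈ A} :=
    measurable_update_shift i s hA
  rw [key A hA, key _ hA']
  have hstep := prod_left_shift μ (Measure.pi fun _ : Fin n => μ) c s @hshift
    (e.symm.measurable hA)
  refine hstep.trans ?_
  apply mul_le_mul_right
  apply le_of_eq
  congr 1
  ext ⟨a, w⟩
  simp only [Set.mem_setOf_eq, Set.mem_preimage]
  have h1 : e.symm (a + s, w) = Fin.insertNth (α := fun _ => ℝ) i (a + s) w := rfl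
  have h2 : e.symm (a, w) = Fin.insertNth (α := fun _ => ℝ) i a w := rfl
  rw [h1, h2]
  have h3 : Function.update (Fin.insertNth (α := fun _ => ℝ) i a w) i
        ((Fin.insertNth (α := fun _ => ℝ) i a w) i + s)
      = Fin.insertNth (α := fun _ => ℝ) i (a + s) w := by
    rw [Fin.insertNth_apply_same, Fin.update_insertNth]
  rw [h3]

section BigSpace

variable {k : ℕ} {ε : ℝ} (hε : 0 < ε) (T : ℝ)

noncomputable def μT (k : ℕ) (ε : ℝ) : Measure (ℝ × (Fin k → ℝ)) :=
  (laplace (2 / ε)).prod (Measure.pi fun _ : Fin k => laplace (4 / ε))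

include hε

lemma shift_top {E : Set (ℝ × (Fin k → ℝ))} (hE : MeasurableSet E) :
    μT k ε E ≤ ENNReal.ofReal (Real.exp ε) * μT k ε {p | (p.1 + (-1), p.2) ∈ E} := by
  have hb : (0:ℝ) < 2 / ε := by positivity
  have h := prod_left_shift (laplace (2 / ε)) (Measure.pi fun _ : Fin k => laplace (4 / ε))
    (ENNReal.ofReal (Real.exp (|(-1 : ℝ)| / (2 / ε)))) (-1)
    (fun {g} hg => lap_lintegral_shift hb (-1) hg) hE
  refine h.trans (mul_le_mul_left ?_ _)
  apply ENNReal.ofReal_le_ofReal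
  apply Real.exp_le_exp.mpr
  rw [abs_neg, abs_one, one_div_div]
  linarith

lemma shift_coord (i : Fin k) {E : Set (ℝ × (Fin k → ℝ))} (hE : MeasurableSet E) :
    μT k ε E ≤ ENNReal.ofReal (Real.exp ε)
      * μT k ε {p | (p.1 + (-1), Function.update p.2 i (p.2 i + (-2))) ∈ E} := by
  have hb1 : (0:ℝ) < 2 / ε := by positivity
  have hb2 : (0:ℝ) < 4 / ε := by positivity
  set c₁ := ENNReal.ofReal (Real.exp (|(-1 : ℝ)| / (2 / ε))) with hc₁
  set c₂ := ENNReal.ofReal (Real.exp (|(-2 : ℝ)| / (4 / ε))) with hc₂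
  have h1 := prod_left_shift (laplace (2 / ε)) (Measure.pi fun _ : Fin k => laplace (4 / ε))
    c₁ (-1) (fun {g} hg => lap_lintegral_shift hb1 (-1) hg) hE
  have hE1 : MeasurableSet {p : ℝ × (Fin k → ℝ) | (p.1 + (-1), p.2) ∈ E} :=
    (measurable_fst.add_const (-1)).prodMk measurable_snd hE
  have hpi : ∀ A : Set (Fin k → ℝ), MeasurableSet A →
      (Measure.pi fun _ : Fin k => laplace (4 / ε)) A
        ≤ c₂ * (Measure.pi fun _ : Fin k => laplace (4 / ε))
            ((fun ν => Function.update ν i (ν i + (-2))) ⁻¹' A) :=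
    fun A hA => pi_shift (laplace (4 / ε)) c₂ (-2)
      (fun {g} hg => lap_lintegral_shift hb2 (-2) hg) i hA
  have h2 := prod_right_shift (laplace (2 / ε)) (Measure.pi fun _ : Fin k => laplace (4 / ε))
    c₂ ENNReal.ofReal_ne_top (fun ν => Function.update ν i (ν i + (-2)))
    (measurable_update_shift i (-2)) hpi hE1
  have hcc : c₁ * c₂ = ENNReal.ofReal (Real.exp ε) := by
    rw [hc₁, hc₂, ← ENNReal.ofReal_mul (Real.exp_nonneg _), ← Real.exp_add]
    congr 1
    have h1' : |(-1 : ℝ)| = 1 := by norm_num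
    have h2' : |(-2 : ℝ)| = 2 := by norm_num
    rw [h1', h2']
    field_simp
    ring
  calc μT k ε E ≤ c₁ * μT k ε {p | (p.1 + (-1), p.2) ∈ E} := h1
    _ ≤ c₁ * (c₂ * μT k ε {p | (p.1, Function.update p.2 i (p.2 i + (-2)))
          ∈ {q : ℝ × (Fin k → ℝ) | (q.1 + (-1), q.2) ∈ E}}) := mul_le_mul_right h2 _
    _ = (c₁ * c₂) * μT k ε {p | (p.1 + (-1), Function.update p.2 i (p.2 i + (-2))) ∈ E} := by
          rw [← mul_assoc]; rfl
    _ = ENNReal.ofReal (Real.exp ε)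
          * μT k ε {p | (p.1 + (-1), Function.update p.2 i (p.2 i + (-2))) ∈ E} := by rw [hcc]

end BigSpace

/-- characterization of `Finset.min = coe`. -/
lemma finset_min_eq_coe_iff {α : Type*} [LinearOrder α] {s : Finset α} {a : α} :
    s.min = (a : WithTop α) ↔ a ∈ s ∧ ∀ b ∈ s, a ≤ b := by
  constructor
  · intro h
    refine ⟨Finset.mem_of_min h, fun b hb => ?_⟩
    have := Finset.min_le hb
    rw [h] at this
    exact_mod_cast this
  · rintro ⟨ha, hb⟩
    exact le_antisymm (Finset.min_le ha)
      (Finset.le_min fun b hbs => WithTop.coe_le_coe.mpr (hb b hbs))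

lemma min_shift_coe {k : ℕ} (T ρ : ℝ) (ν : Fin k → ℝ) {x x' : Fin k → ℝ}
    (hx : ∀ j, |x j - x' j| ≤ 1) (i : Fin k)
    (h : (Finset.univ.filter fun j : Fin k =>
        T + (ρ + (-1)) ≤ x j + Function.update ν i (ν i + (-2)) j).min = (i : WithTop (Fin k))) :
    (Finset.univ.filter fun j : Fin k => T + ρ ≤ x' j + ν j).min = (i : WithTop (Fin k)) := by
  rw [finset_min_eq_coe_iff] at h ⊢
  obtain ⟨hi, hall⟩ := h
  rw [Finset.mem_filter] at hi
  have hi' : T + (ρ + (-1)) ≤ x i + (ν i + (-2)) := by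
    have := hi.2
    rwa [Function.update_self] at this
  have hxi := abs_le.mp (hx i)
  constructor
  · rw [Finset.mem_filter]
    exact ⟨Finset.mem_univ _, by linarith [hxi.2]⟩
  · intro j hj
    rw [Finset.mem_filter] at hj
    by_cases hji : j = i
    · exact le_of_eq hji.symm
    · apply hall j
      rw [Finset.mem_filter]
      refine ⟨Finset.mem_univ _, ?_⟩
      rw [Function.update_of_ne hji]
      have hxj := abs_le.mp (hx j)
      have := hj.2
      linarith [hxj.1]

lemma min_shift_top {k : ℕ} (T ρ : ℝ) (ν : Fin k → ℝ) {x x' : Fin k → ℝ}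
    (hx : ∀ j, |x j - x' j| ≤ 1)
    (h : (Finset.univ.filter fun j : Fin k => T + (ρ + (-1)) ≤ x j + ν j).min = ⊤) :
    (Finset.univ.filter fun j : Fin k => T + ρ ≤ x' j + ν j).min = ⊤ := by
  rw [Finset.min_eq_top, Finset.filter_eq_empty_iff] at h ⊢
  intro j _
  have hj := h (Finset.mem_univ j)
  have hxj := abs_le.mp (hx j)
  push_neg at hj ⊢
  linarith [hxj.1]

lemma measurable_F {k : ℕ} (T : ℝ) (x : Fin k → ℝ) :
    Measurable fun p : ℝ × (Fin k → ℝ) =>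
      (Finset.univ.filter fun i : Fin k => T + p.1 ≤ x i + p.2 i).min := by
  apply measurable_to_countable'
  intro y
  have hrw : (fun p : ℝ × (Fin k → ℝ) =>
        (Finset.univ.filter fun i : Fin k => T + p.1 ≤ x i + p.2 i).min) ⁻¹' {y}
      = ⋃ (S : Finset (Fin k)) (_ : S.min = y),
          ⋂ i : Fin k, {p : ℝ × (Fin k → ℝ) | T + p.1 ≤ x i + p.2 i ↔ i ∈ S} := by
    ext p
    simp only [Set.mem_preimage, Set.mem_singleton_iff, Set.mem_iUnion, Set.mem_iInter,
      Set.mem_setOf_eq]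
    constructor
    · intro h
      refine ⟨Finset.univ.filter fun i : Fin k => T + p.1 ≤ x i + p.2 i, h, fun i => ?_⟩
      simp [Finset.mem_filter]
    · rintro ⟨S, hS, hiff⟩
      have : (Finset.univ.filter fun i : Fin k => T + p.1 ≤ x i + p.2 i) = S := by
        ext i
        simp only [Finset.mem_filter, Finset.mem_univ, true_and]
        exact hiff i
      rw [this, hS]
  rw [hrw]
  apply MeasurableSet.iUnion
  intro S
  apply MeasurableSet.iUnion
  intro _
  apply MeasurableSet.iInter
  intro i
  have hle : MeasurableSet {p : ℝ × (Fin k → ℝ) | T + p.1 ≤ x i + p.2 i} :=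
    measurableSet_le (measurable_const.add measurable_fst)
      (measurable_const.add ((measurable_pi_apply i).comp measurable_snd))
  by_cases hi : i ∈ S
  · have : {p : ℝ × (Fin k → ℝ) | T + p.1 ≤ x i + p.2 i ↔ i ∈ S}
        = {p : ℝ × (Fin k → ℝ) | T + p.1 ≤ x i + p.2 i} := by
      ext p; simp [hi]
    rw [this]; exact hle
  · have : {p : ℝ × (Fin k → ℝ) | T + p.1 ≤ x i + p.2 i ↔ i ∈ S}
        = {p : ℝ × (Fin k → ℝ) | T + p.1 ≤ x i + p.2 i}ᶜ := by
      ext p; simp [hi]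
    rw [this]; exact hle.compl

lemma aboveThreshold_singleton_le {k : ℕ} {ε : ℝ} (hε : 0 < ε) (T : ℝ) {x x' : Fin k → ℝ}
    (hx : ∀ j, |x j - x' j| ≤ 1) (y : WithTop (Fin k)) :
    aboveThreshold ε T x {y} ≤ ENNReal.ofReal (Real.exp ε) * aboveThreshold ε T x' {y} := by
  have hy : MeasurableSet ({y} : Set (WithTop (Fin k))) := measurableSet_singleton y
  rw [show aboveThreshold ε T x = (μT k ε).map (fun p : ℝ × (Fin k → ℝ) =>
      (Finset.univ.filter fun i : Fin k => T + p.1 ≤ x i + p.2 i).min) from rfl,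
    show aboveThreshold ε T x' = (μT k ε).map (fun p : ℝ × (Fin k → ℝ) =>
      (Finset.univ.filter fun i : Fin k => T + p.1 ≤ x' i + p.2 i).min) from rfl,
    Measure.map_apply (measurable_F T x) hy, Measure.map_apply (measurable_F T x') hy]
  set Fx := fun p : ℝ × (Fin k → ℝ) =>
    (Finset.univ.filter fun i : Fin k => T + p.1 ≤ x i + p.2 i).min with hFx
  set Fx' := fun p : ℝ × (Fin k → ℝ) =>
    (Finset.univ.filter fun i : Fin k => T + p.1 ≤ x' i + p.2 i).min with hFx'
  have hEx : MeasurableSet (Fx ⁻¹' {y}) := (measurable_F T x) hy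
  cases y with
  | top =>
    have h := shift_top hε (hE := hEx)
    refine h.trans (mul_le_mul_right (measure_mono ?_) _)
    intro p hp
    simp only [Set.mem_setOf_eq, Set.mem_preimage, Set.mem_singleton_iff] at hp ⊢
    exact min_shift_top T p.1 p.2 hx hp
  | coe i =>
    have h := shift_coord hε i (hE := hEx)
    refine h.trans (mul_le_mul_right (measure_mono ?_) _)
    intro p hp
    simp only [Set.mem_setOf_eq, Set.mem_preimage, Set.mem_singleton_iff] at hp ⊢
    exact min_shift_coe T p.1 p.2 hx i hp

lemma aboveThreshold_le {k : ℕ} {ε : ℝ} (hε : 0 < ε) (T : ℝ) {x x' : Fin k → ℝ}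
    (hx : ∀ j, |x j - x' j| ≤ 1) (S : Set (WithTop (Fin k))) :
    aboveThreshold ε T x S ≤ ENNReal.ofReal (Real.exp ε) * aboveThreshold ε T x' S := by
  have hSrw : S = ⋃ y ∈ S, {y} := (Set.biUnion_of_singleton S).symm
  have hcnt : S.Countable := S.to_countable
  have hdis : S.PairwiseDisjoint (fun y : WithTop (Fin k) => ({y} : Set (WithTop (Fin k)))) :=
    fun a _ b _ hab => by simp [Function.onFun, Set.disjoint_singleton, hab]
  have hms : ∀ b ∈ S, MeasurableSet ({b} : Set (WithTop (Fin k))) := fun b _ => measurableSet_singleton b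
  rw [hSrw, measure_biUnion hcnt hdis hms, measure_biUnion hcnt hdis hms]
  calc ∑' y : S, aboveThreshold ε T x {(y : WithTop (Fin k))}
      ≤ ∑' y : S, ENNReal.ofReal (Real.exp ε) * aboveThreshold ε T x' {(y : WithTop (Fin k))} :=
        ENNReal.tsum_le_tsum fun y => aboveThreshold_singleton_le hε T hx y
    _ = ENNReal.ofReal (Real.exp ε) * ∑' y : S, aboveThreshold ε T x' {(y : WithTop (Fin k))} :=
        ENNReal.tsum_mul_left

end DPaux

/-- The `PermutedAboveThreshold` mechanism applied to `k` queries of sensitivity at most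
one is `ε`-DP. -/
theorem permutedAboveThreshold_is_DP (k : ℕ) (ε : ℝ) (hε : 0 < ε) (T : ℝ)
    (Ω : Type) (N : Ω → Ω → Prop) (hsym : ∀ X X', N X X' → N X' X)
    (f : Fin k → Ω → ℝ) (hf : ∀ i X X', N X X' → |f i X - f i X'| ≤ 1) :
    IsDP N (fun X => permutedAboveThreshold ε T fun i => f i X) ε 0 := by
  intro X X' hN S hS
  rw [ENNReal.ofReal_zero, add_zero]
  simp only
  unfold permutedAboveThreshold
  have hker : ∀ x : Fin k → ℝ, Measurable fun π : Equiv.Perm (Fin k) =>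
      (aboveThreshold ε T fun j => x (π j)).map (WithTop.map fun i => π.symm i) :=
    fun x => measurable_from_top
  rw [Measure.bind_apply hS (hker fun i => f i X).aemeasurable, Measure.bind_apply hS (hker fun i => f i X').aemeasurable]
  have hmap : ∀ π : Equiv.Perm (Fin k), Measurable (WithTop.map fun i => π.symm i) :=
    fun π => measurable_of_countable _
  have step : ∀ π : Equiv.Perm (Fin k),
      ((aboveThreshold ε T fun j => f (π j) X).map (WithTop.map fun i => π.symm i)) S
        ≤ ENNReal.ofReal (Real.exp ε)
          * ((aboveThreshold ε T fun j => f (π j) X').map (WithTop.map fun i => π.symm i)) S := by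
    intro π
    rw [Measure.map_apply (hmap π) hS, Measure.map_apply (hmap π) hS]
    exact DPaux.aboveThreshold_le hε T (fun j => hf (π j) X X' hN) _
  calc ∫⁻ π, ((aboveThreshold ε T fun j => f (π j) X).map (WithTop.map fun i => π.symm i)) S
        ∂(PMF.uniformOfFintype (Equiv.Perm (Fin k))).toMeasure
      ≤ ∫⁻ π, ENNReal.ofReal (Real.exp ε)
          * ((aboveThreshold ε T fun j => f (π j) X').map (WithTop.map fun i => π.symm i)) S
        ∂(PMF.uniformOfFintype (Equiv.Perm (Fin k))).toMeasure := lintegral_mono step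
    _ = ENNReal.ofReal (Real.exp ε)
        * ∫⁻ π, ((aboveThreshold ε T fun j => f (π j) X').map (WithTop.map fun i => π.symm i)) S
          ∂(PMF.uniformOfFintype (Equiv.Perm (Fin k))).toMeasure :=
        lintegral_const_mul' _ _ ENNReal.ofReal_ne_top
end

section
/- Let ε ∈ (0,1], δ ∈ (0,0.5], and let k ≥ 3 be an integer. Set κ = 0.9, λ = 0.95, L = ⌈10·log(log k)/log(1/κ)⌉, ε_0 = ε/(1000·√(log(1/δ))), and for each ℓ with 1 ≤ ℓ ≤ L set m_ℓ = κ^ℓ·k and ε_ℓ = ε_0/(√k·√(ℓ·λ^ℓ)). Then Σ_{ℓ=1}^{L} [√(2·m_ℓ·log(2^ℓ/δ))·ε_ℓ + m_ℓ·ε_ℓ·(e^{ε_ℓ} − 1)] ≤ ε, and Σ_{ℓ=1}^{L} 0.5^ℓ·δ ≤ δ. -/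
lemma geom_Icc_le {r : ℝ} (h0 : 0 ≤ r) (h1 : r < 1) (L : ℕ) :
    ∑ ℓ ∈ Finset.Icc 1 L, r ^ ℓ ≤ r / (1 - r) := by
  have hne : r ≠ 1 := ne_of_lt h1
  have hden : 0 < 1 - r := by linarith
  have hsum : ∑ i ∈ Finset.range L, r ^ i ≤ 1 / (1 - r) := by
    rw [geom_sum_eq hne]
    have he : (r ^ L - 1) / (r - 1) = (1 - r ^ L) / (1 - r) := by
      rw [div_eq_div_iff (by linarith : r - 1 ≠ 0) (ne_of_gt hden)]; ring
    rw [he]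
    gcongr
    nlinarith [pow_nonneg h0 L]
  have h : Finset.Icc 1 L = Finset.Ico 1 (L + 1) := by rw [Finset.Ico_add_one_right_eq_Icc]
  rw [h, Finset.sum_Ico_eq_sum_range]
  simp only [Nat.add_sub_cancel]
  have heq : ∀ i ∈ Finset.range L, r ^ (1 + i) = r * r ^ i := by
    intro i _; rw [pow_add, pow_one]
  rw [Finset.sum_congr rfl heq, ← Finset.mul_sum]
  calc r * ∑ i ∈ Finset.range L, r ^ i ≤ r * (1 / (1 - r)) :=
        mul_le_mul_of_nonneg_left hsum h0
    _ = r / (1 - r) := by ring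

lemma aux_kL {k : ℕ} (hk : 3 ≤ k) :
    1 / 3300 ≤ (k : ℝ) * (0.95 : ℝ) ^ ⌈10 * Real.log (Real.log k) / Real.log (1 / (0.9 : ℝ))⌉₊ := by
  have hk3 : (3 : ℝ) ≤ (k : ℝ) := by exact_mod_cast hk
  have hk0 : (0 : ℝ) < k := by linarith
  have hlogk : 1 ≤ Real.log k := by
    rw [Real.le_log_iff_exp_le hk0]
    have := Real.exp_one_lt_d9
    linarith
  have hlogk0 : 0 < Real.log k := by linarith
  set y := Real.log (Real.log k) with hy
  have hy0 : 0 ≤ y := Real.log_nonneg hlogk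
  have h19 : (1 / (0.9 : ℝ)) = 10 / 9 := by norm_num
  rw [h19]
  have hden : 0 < Real.log (10 / 9 : ℝ) := Real.log_pos (by norm_num)
  set B := 10 * y / Real.log (10 / 9 : ℝ) with hB
  have hB0 : 0 ≤ B := by positivity
  have hLB : (⌈B⌉₊ : ℝ) ≤ B + 1 := le_of_lt (Nat.ceil_lt_add_one hB0)
  have h95 : (0 : ℝ) < 0.95 := by norm_num
  have hpowL : (0.95 : ℝ) ^ (B + 1) ≤ (0.95 : ℝ) ^ (⌈B⌉₊ : ℕ) := by
    rw [← Real.rpow_natCast 0.95 ⌈B⌉₊]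
    exact Real.rpow_le_rpow_of_exponent_ge h95 (by norm_num) hLB
  have hexpB : (0.95 : ℝ) ^ (B + 1) = Real.exp (B * Real.log 0.95) * 0.95 := by
    rw [Real.rpow_add h95, Real.rpow_one, Real.rpow_def_of_pos h95,
      mul_comm (Real.log 0.95) B]
  have hkey : -(5 * y) ≤ B * Real.log 0.95 := by
    have hlog95 : Real.log (0.95 : ℝ) = -Real.log (20 / 19 : ℝ) := by
      rw [← Real.log_inv]; norm_num
    have h2 : 2 * Real.log (20 / 19 : ℝ) ≤ Real.log (10 / 9 : ℝ) := by
      have h := Real.log_le_log (by positivity : (0:ℝ) < (20/19 : ℝ)^2)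
        (by norm_num : ((20/19:ℝ))^2 ≤ 10/9)
      rwa [Real.log_pow, Nat.cast_ofNat] at h
    have hl2019 : 0 ≤ Real.log (20 / 19 : ℝ) := Real.log_nonneg (by norm_num)
    rw [hlog95, hB, div_mul_eq_mul_div, le_div_iff₀ hden]
    have := mul_le_mul_of_nonneg_left h2 hy0
    nlinarith
  have h5 : Real.exp (5 * y) = Real.log k ^ 5 := by
    rw [show (5 : ℝ) * y = ((5 : ℕ) : ℝ) * y by norm_num, Real.exp_nat_mul, hy,
      Real.exp_log hlogk0]
  have hexp5 : Real.exp (-(5 * y)) = 1 / Real.log k ^ 5 := by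
    rw [Real.exp_neg, h5, inv_eq_one_div]
  have hlk5 : Real.log k ^ 5 ≤ 3125 * k := by
    have h15 : Real.log k = 5 * Real.log ((k : ℝ) ^ (1 / 5 : ℝ)) := by
      rw [Real.log_rpow hk0]; ring
    have hp : 0 < (k : ℝ) ^ (1 / 5 : ℝ) := Real.rpow_pos_of_pos hk0 _
    have hle : Real.log ((k : ℝ) ^ (1 / 5 : ℝ)) ≤ (k : ℝ) ^ (1 / 5 : ℝ) := by
      linarith [Real.log_le_sub_one_of_pos hp]
    have hnn : 0 ≤ 5 * Real.log ((k : ℝ) ^ (1 / 5 : ℝ)) := by rw [← h15]; linarith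
    have hb : Real.log k ^ 5 ≤ (5 * (k : ℝ) ^ (1 / 5 : ℝ)) ^ 5 := by
      rw [h15]; exact pow_le_pow_left₀ hnn (by linarith) 5
    have hxk : ((k : ℝ) ^ (1 / 5 : ℝ)) ^ (5 : ℕ) = (k : ℝ) := by
      rw [← Real.rpow_natCast ((k : ℝ) ^ (1 / 5 : ℝ)) 5, ← Real.rpow_mul hk0.le]
      norm_num
    calc Real.log k ^ 5 ≤ (5 * (k : ℝ) ^ (1 / 5 : ℝ)) ^ 5 := hb
      _ = 3125 * ((k : ℝ) ^ (1 / 5 : ℝ)) ^ (5 : ℕ) := by ring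
      _ = 3125 * k := by rw [hxk]
  have hlk5pos : 0 < Real.log k ^ 5 := by positivity
  have hstep : 1 / 3300 ≤ (k : ℝ) * (Real.exp (-(5 * y)) * 0.95) := by
    rw [hexp5]
    rw [show (k : ℝ) * (1 / Real.log k ^ 5 * 0.95) = 0.95 * k / Real.log k ^ 5 by ring,
      le_div_iff₀ hlk5pos]
    nlinarith
  have hmono : Real.exp (-(5 * y)) * 0.95 ≤ Real.exp (B * Real.log 0.95) * 0.95 := by
    have := Real.exp_le_exp.mpr hkey
    nlinarith [Real.exp_pos (-(5*y))]
  calc (1 : ℝ) / 3300 ≤ (k : ℝ) * (Real.exp (-(5 * y)) * 0.95) := hstep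
    _ ≤ (k : ℝ) * (Real.exp (B * Real.log 0.95) * 0.95) :=
        mul_le_mul_of_nonneg_left hmono hk0.le
    _ = (k : ℝ) * (0.95 : ℝ) ^ (B + 1) := by rw [hexpB]
    _ ≤ (k : ℝ) * (0.95 : ℝ) ^ (⌈B⌉₊ : ℕ) := mul_le_mul_of_nonneg_left hpowL hk0.le

set_option maxHeartbeats 2000000 in
/-- The numerical computation underlying the privacy analysis of the Iterative Sparse
Vector Correction algorithm: with `κ = 0.9`, `λ = 0.95`, `L = ⌈10·log(log k)/log(1/κ)⌉`,
`ε₀ = ε/(1000·√(log(1/δ)))`, `m_ℓ = κ^ℓ·k`, and `ε_ℓ = ε₀/(√k·√(ℓ·λ^ℓ))`, the total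
privacy cost `Σ_ℓ [√(2·m_ℓ·log(2^ℓ/δ))·ε_ℓ + m_ℓ·ε_ℓ·(e^{ε_ℓ} − 1)]` obtained from
advanced composition is at most `ε`, and `Σ_ℓ 0.5^ℓ·δ ≤ δ`. -/
theorem iterative_svc_privacy_budget (ε δ : ℝ) (hε0 : 0 < ε) (hε1 : ε ≤ 1)
    (hδ0 : 0 < δ) (hδ1 : δ ≤ 0.5) (k : ℕ) (hk : 3 ≤ k) :
    let κ : ℝ := 0.9
    let lam : ℝ := 0.95
    let L : ℕ := ⌈10 * Real.log (Real.log k) / Real.log (1 / κ)⌉₊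
    let ε₀ : ℝ := ε / (1000 * Real.sqrt (Real.log (1 / δ)))
    let m : ℕ → ℝ := fun ℓ => κ ^ ℓ * k
    let εs : ℕ → ℝ := fun ℓ => ε₀ / (Real.sqrt k * Real.sqrt (ℓ * lam ^ ℓ))
    (∑ ℓ ∈ Finset.Icc 1 L,
        (Real.sqrt (2 * m ℓ * Real.log (2 ^ ℓ / δ)) * εs ℓ +
          m ℓ * εs ℓ * (Real.exp (εs ℓ) - 1)) ≤ ε) ∧
      (∑ ℓ ∈ Finset.Icc 1 L, (0.5 : ℝ) ^ ℓ * δ ≤ δ) := by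
  intro κ lam L ε₀ m εs
  have hLdef : L = ⌈10 * Real.log (Real.log k) / Real.log (1 / (0.9 : ℝ))⌉₊ := rfl
  have hε₀def : ε₀ = ε / (1000 * Real.sqrt (Real.log (1 / δ))) := rfl
  have hmdef : m = fun ℓ => (0.9 : ℝ) ^ ℓ * k := rfl
  have hεsdef : εs = fun ℓ : ℕ => ε₀ / (Real.sqrt k * Real.sqrt ((ℓ : ℝ) * (0.95 : ℝ) ^ ℓ)) := rfl
  clear_value εs m ε₀ L lam κ
  clear κ lam
  have hkR : (0 : ℝ) < k := by
    have : (3 : ℝ) ≤ (k : ℝ) := by exact_mod_cast hk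
    linarith
  constructor
  · -- main privacy bound
    set c := Real.log (1 / δ) with hc
    have h2δ : (2 : ℝ) ≤ 1 / δ := by rw [le_div_iff₀ hδ0]; linarith
    have hc2 : Real.log 2 ≤ c := by rw [hc]; exact Real.log_le_log (by norm_num) h2δ
    have hlog2 : (0.693 : ℝ) ≤ Real.log 2 := by linarith [Real.log_two_gt_d9]
    have hc0 : 0 < c := by linarith
    have hsc : (0.8 : ℝ) ≤ Real.sqrt c := by
      rw [Real.le_sqrt (by norm_num) hc0.le]; linarith
    have hsc0 : 0 < Real.sqrt c := by linarith
    have hε₀body : ε₀ = ε / (1000 * Real.sqrt c) := hε₀def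
    have hε₀0 : 0 < ε₀ := by rw [hε₀body]; positivity
    have hε₀c : ε₀ * Real.sqrt c = ε / 1000 := by
      rw [hε₀body]; field_simp
    have hε₀ε : ε₀ ≤ ε / 800 := by
      rw [hε₀body, div_le_div_iff₀ (by positivity) (by norm_num)]
      have i0 := mul_le_mul_of_nonneg_left hsc hε0.le
      linarith [i0]
    have hε₀1 : ε₀ ≤ 1 / 800 := by
      have : ε / 800 ≤ 1 / 800 := by linarith
      linarith
    set r := Real.sqrt (0.9 / 0.95 : ℝ) with hrdef
    have hr0 : 0 ≤ r := Real.sqrt_nonneg _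
    have hrr : r ^ 2 = 0.9 / 0.95 := Real.sq_sqrt (by norm_num)
    have hr974 : r ≤ 0.974 := by
      rw [hrdef, Real.sqrt_le_left (by norm_num)]; norm_num
    have hr1 : r < 1 := by linarith
    have hkL : (1 : ℝ) / 3300 ≤ (k : ℝ) * (0.95 : ℝ) ^ L := by
      rw [hLdef]; exact aux_kL hk
    have key : ∀ ℓ ∈ Finset.Icc 1 L,
        Real.sqrt (2 * m ℓ * Real.log (2 ^ ℓ / δ)) * εs ℓ +
          m ℓ * εs ℓ * (Real.exp (εs ℓ) - 1) ≤ (ε / 500 + 3 * ε₀ ^ 2) * r ^ ℓ := by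
      intro ℓ hℓ
      obtain ⟨h1ℓ, hℓL⟩ := Finset.mem_Icc.mp hℓ
      have ha1 : (1 : ℝ) ≤ (ℓ : ℝ) := by exact_mod_cast h1ℓ
      have hlam_l : (0 : ℝ) < (0.95 : ℝ) ^ ℓ := by positivity
      have hkap_l : (0 : ℝ) < (0.9 : ℝ) ^ ℓ := by positivity
      have hmℓ : m ℓ = (0.9 : ℝ) ^ ℓ * k := by rw [hmdef]
      have hεsℓ : εs ℓ = ε₀ / (Real.sqrt k * Real.sqrt (ℓ * (0.95 : ℝ) ^ ℓ)) := by rw [hεsdef]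
      set E : ℝ := (k : ℝ) * ((ℓ : ℝ) * (0.95 : ℝ) ^ ℓ) with hE
      have hE0 : 0 < E := by rw [hE]; positivity
      have hD : Real.sqrt k * Real.sqrt (ℓ * (0.95 : ℝ) ^ ℓ) = Real.sqrt E := by
        rw [hE, Real.sqrt_mul (Nat.cast_nonneg k)]
      have hsE : 0 < Real.sqrt E := Real.sqrt_pos.mpr hE0
      have hεs : εs ℓ = ε₀ / Real.sqrt E := by rw [hεsℓ, hD]
      have hεs0 : 0 < εs ℓ := by rw [hεs]; positivity
      have hEge : 1 / 640000 ≤ E := by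
        have hp1 : (0.95 : ℝ) ^ L ≤ (0.95 : ℝ) ^ ℓ :=
          pow_le_pow_of_le_one (by norm_num) (by norm_num) hℓL
        have hp3 : (0.95 : ℝ) ^ ℓ ≤ (ℓ : ℝ) * (0.95 : ℝ) ^ ℓ :=
          le_mul_of_one_le_left (pow_nonneg (by norm_num) ℓ) ha1
        have hp2 : (k : ℝ) * (0.95 : ℝ) ^ L ≤ E := by
          rw [hE]
          exact mul_le_mul_of_nonneg_left (hp1.trans hp3) hkR.le
        linarith
      have hεs1 : εs ℓ ≤ 1 := by
        rw [hεs, div_le_one hsE]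
        have : (1 : ℝ) / 800 ≤ Real.sqrt E := by
          rw [Real.le_sqrt (by norm_num) hE0.le]
          linarith
        linarith
      have hexp : Real.exp (εs ℓ) - 1 ≤ 3 * εs ℓ := by
        have h1 : 1 - εs ℓ ≤ Real.exp (-(εs ℓ)) := by
          linarith [Real.add_one_le_exp (-(εs ℓ))]
        have h2 : Real.exp (εs ℓ) * (1 - εs ℓ) ≤ 1 := by
          have h3 := mul_le_mul_of_nonneg_left h1 (Real.exp_pos (εs ℓ)).le
          rwa [← Real.exp_add, add_neg_cancel, Real.exp_zero] at h3
        have hee : Real.exp (εs ℓ) ≤ 3 := by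
          calc Real.exp (εs ℓ) ≤ Real.exp 1 := Real.exp_le_exp.mpr hεs1
            _ ≤ 3 := by linarith [Real.exp_one_lt_d9]
        have h4 : 0 ≤ (3 - Real.exp (εs ℓ)) * εs ℓ :=
          mul_nonneg (by linarith) hεs0.le
        linarith [h2, h4]
      have hεs2 : (εs ℓ) ^ 2 = ε₀ ^ 2 / E := by
        rw [hεs, div_pow, Real.sq_sqrt hE0.le]
      have hrs : (0.9 / 0.95 : ℝ) ^ ℓ ≤ r ^ ℓ := by
        apply pow_le_pow_left₀ (by norm_num)
        rw [hrdef, Real.le_sqrt (by norm_num) (by norm_num)]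
        norm_num
      have hterm2 : m ℓ * εs ℓ * (Real.exp (εs ℓ) - 1) ≤ 3 * ε₀ ^ 2 * r ^ ℓ := by
        have hm0 : 0 ≤ m ℓ := by rw [hmℓ]; positivity
        have h1 : m ℓ * εs ℓ * (Real.exp (εs ℓ) - 1) ≤ m ℓ * εs ℓ * (3 * εs ℓ) := by
          apply mul_le_mul_of_nonneg_left hexp
          positivity
        have h3 : m ℓ * (εs ℓ) ^ 2 ≤ ε₀ ^ 2 * r ^ ℓ := by
          rw [hεs2, hmℓ, hE]
          have heq : (0.9 : ℝ) ^ ℓ * k * (ε₀ ^ 2 / ((k : ℝ) * ((ℓ : ℝ) * (0.95 : ℝ) ^ ℓ)))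
              = ε₀ ^ 2 * ((0.9 / 0.95 : ℝ) ^ ℓ / ℓ) := by
            rw [div_pow]; field_simp
          rw [heq]
          have hle1 : (0.9 / 0.95 : ℝ) ^ ℓ / ℓ ≤ (0.9 / 0.95 : ℝ) ^ ℓ := by
            rw [div_le_iff₀ (by linarith : (0 : ℝ) < (ℓ : ℝ))]
            exact le_mul_of_one_le_right (pow_nonneg (by norm_num) ℓ) ha1
          calc ε₀ ^ 2 * ((0.9 / 0.95 : ℝ) ^ ℓ / ℓ) ≤ ε₀ ^ 2 * (0.9 / 0.95 : ℝ) ^ ℓ := by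
                apply mul_le_mul_of_nonneg_left hle1 (sq_nonneg ε₀)
            _ ≤ ε₀ ^ 2 * r ^ ℓ := mul_le_mul_of_nonneg_left hrs (sq_nonneg ε₀)
        calc m ℓ * εs ℓ * (Real.exp (εs ℓ) - 1) ≤ m ℓ * εs ℓ * (3 * εs ℓ) := h1
          _ = 3 * (m ℓ * (εs ℓ) ^ 2) := by ring
          _ ≤ 3 * (ε₀ ^ 2 * r ^ ℓ) := by linarith
          _ = 3 * ε₀ ^ 2 * r ^ ℓ := by ring
      have hterm1 : Real.sqrt (2 * m ℓ * Real.log (2 ^ ℓ / δ)) * εs ℓ ≤ ε / 500 * r ^ ℓ := by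
        have hlogval : Real.log ((2 : ℝ) ^ ℓ / δ) = ℓ * Real.log 2 + c := by
          rw [Real.log_div (by positivity) (ne_of_gt hδ0), Real.log_pow, hc, one_div,
            Real.log_inv]
          ring
        have hG0 : 0 ≤ 2 * m ℓ * Real.log ((2 : ℝ) ^ ℓ / δ) := by
          rw [hlogval, hmℓ]
          have h5 : 0 ≤ (ℓ : ℝ) * Real.log 2 :=
            mul_nonneg (by linarith) (by linarith)
          have h6 : 0 ≤ (ℓ : ℝ) * Real.log 2 + c := by linarith
          positivity
        have hform : Real.sqrt (2 * m ℓ * Real.log ((2 : ℝ) ^ ℓ / δ)) * εs ℓ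
            = ε₀ * Real.sqrt (2 * m ℓ * Real.log ((2 : ℝ) ^ ℓ / δ) / E) := by
          rw [hεs, Real.sqrt_div hG0 E]
          ring
        rw [hform]
        have hGE : 2 * m ℓ * Real.log ((2 : ℝ) ^ ℓ / δ) / E ≤ 4 * c * (0.9 / 0.95 : ℝ) ^ ℓ := by
          rw [div_le_iff₀ hE0, hlogval, hmℓ, hE, div_pow]
          have hcℓ : (ℓ : ℝ) * Real.log 2 + c ≤ 2 * c * ℓ := by
            have i1 : (ℓ : ℝ) * Real.log 2 ≤ (ℓ : ℝ) * c :=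
              mul_le_mul_of_nonneg_left hc2 (by linarith)
            have i2 : c ≤ c * ℓ := le_mul_of_one_le_right hc0.le ha1
            linarith [i1, i2]
          have heq2 : 4 * c * ((0.9 : ℝ) ^ ℓ / (0.95 : ℝ) ^ ℓ) *
              ((k : ℝ) * ((ℓ : ℝ) * (0.95 : ℝ) ^ ℓ)) = 4 * c * (0.9 : ℝ) ^ ℓ * k * ℓ := by
            field_simp
          rw [heq2]
          have i3 := mul_le_mul_of_nonneg_left hcℓ
            (by positivity : (0:ℝ) ≤ 2 * ((0.9:ℝ) ^ ℓ * k))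
          linarith [i3]
        have hsqrtGE : Real.sqrt (2 * m ℓ * Real.log ((2 : ℝ) ^ ℓ / δ) / E)
            ≤ 2 * Real.sqrt c * r ^ ℓ := by
          have h4 : (4 : ℝ) * c * (0.9 / 0.95 : ℝ) ^ ℓ = (2 * Real.sqrt c * r ^ ℓ) ^ 2 := by
            rw [mul_pow, mul_pow, Real.sq_sqrt hc0.le, ← pow_mul, mul_comm ℓ 2, pow_mul, hrr]
            ring
          calc Real.sqrt (2 * m ℓ * Real.log ((2 : ℝ) ^ ℓ / δ) / E)
              ≤ Real.sqrt (4 * c * (0.9 / 0.95 : ℝ) ^ ℓ) := Real.sqrt_le_sqrt hGE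
            _ = 2 * Real.sqrt c * r ^ ℓ := by rw [h4]; exact Real.sqrt_sq (by positivity)
        calc ε₀ * Real.sqrt (2 * m ℓ * Real.log ((2 : ℝ) ^ ℓ / δ) / E)
            ≤ ε₀ * (2 * Real.sqrt c * r ^ ℓ) := mul_le_mul_of_nonneg_left hsqrtGE hε₀0.le
          _ = ε₀ * Real.sqrt c * (2 * r ^ ℓ) := by ring
          _ = ε / 1000 * (2 * r ^ ℓ) := by rw [hε₀c]
          _ = ε / 500 * r ^ ℓ := by ring
      have : Real.sqrt (2 * m ℓ * Real.log (2 ^ ℓ / δ)) * εs ℓ ≤ ε / 500 * r ^ ℓ := hterm1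
      linarith
    have hC0 : 0 ≤ ε / 500 + 3 * ε₀ ^ 2 := by positivity
    have h38 : r / (1 - r) ≤ 38 := by
      rw [div_le_iff₀ (by linarith : (0 : ℝ) < 1 - r)]
      linarith
    calc ∑ ℓ ∈ Finset.Icc 1 L,
          (Real.sqrt (2 * m ℓ * Real.log (2 ^ ℓ / δ)) * εs ℓ +
            m ℓ * εs ℓ * (Real.exp (εs ℓ) - 1))
        ≤ ∑ ℓ ∈ Finset.Icc 1 L, (ε / 500 + 3 * ε₀ ^ 2) * r ^ ℓ := Finset.sum_le_sum key
      _ = (ε / 500 + 3 * ε₀ ^ 2) * ∑ ℓ ∈ Finset.Icc 1 L, r ^ ℓ := by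
          rw [← Finset.mul_sum]
      _ ≤ (ε / 500 + 3 * ε₀ ^ 2) * (r / (1 - r)) :=
          mul_le_mul_of_nonneg_left (geom_Icc_le hr0 hr1 L) hC0
      _ ≤ (ε / 500 + 3 * ε₀ ^ 2) * 38 := mul_le_mul_of_nonneg_left h38 hC0
      _ ≤ ε := by
          have i4 := mul_le_mul hε₀ε hε₀1 hε₀0.le (by positivity : (0:ℝ) ≤ ε / 800)
          linarith [i4]
  · rw [← Finset.sum_mul]
    have hg := geom_Icc_le (r := 0.5) (by norm_num) (by norm_num) L
    calc (∑ ℓ ∈ Finset.Icc 1 L, (0.5 : ℝ) ^ ℓ) * δ ≤ 0.5 / (1 - 0.5) * δ :=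
          mul_le_mul_of_nonneg_right hg hδ0.le
      _ = δ := by norm_num
end

section
/- There is an absolute constant C > 0 such that for every integer k ≥ 3 and every ε_0 > 0 the following holds. Set κ = 0.9, λ = 0.95, L = ⌈10·log(log k)/log(1/κ)⌉, and for each ℓ with 1 ≤ ℓ ≤ L+1 set m_ℓ = κ^ℓ·k, ε_ℓ = ε_0/(√k·√(ℓ·λ^ℓ)), and w_ℓ = 100·log(500·k/m_ℓ)/ε_ℓ. Then Σ_{ℓ=1}^{L+1} w_ℓ ≤ C·√k/ε_0. -/
private lemma sqrt_pow_aux (x : ℝ) (hx : 0 ≤ x) (n : ℕ) :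
    Real.sqrt (x ^ n) = (Real.sqrt x) ^ n := by
  induction n with
  | zero => simp
  | succ n ih => rw [pow_succ, pow_succ, Real.sqrt_mul (pow_nonneg hx n), ih]

private lemma widthTermBound (k : ℕ) (hk : 3 ≤ k) (ε₀ : ℝ) (hε : 0 < ε₀)
    (ℓ : ℕ) (hℓ : 1 ≤ ℓ) :
    100 * Real.log (500 * k / ((0.9:ℝ) ^ ℓ * k)) /
      (ε₀ / (Real.sqrt k * Real.sqrt (ℓ * (0.95:ℝ) ^ ℓ)))
    ≤ 50000 * (ℓ : ℝ) ^ 2 * (Real.sqrt 0.95) ^ ℓ * Real.sqrt k / ε₀ := by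
  have hk0 : (0:ℝ) < k := by positivity
  have hℓ1 : (1:ℝ) ≤ (ℓ : ℝ) := by exact_mod_cast hℓ
  have hℓ0 : (0:ℝ) < (ℓ : ℝ) := by linarith
  have harg : (500 : ℝ) * k / ((0.9:ℝ) ^ ℓ * k) = 500 / (0.9:ℝ) ^ ℓ := by
    rw [mul_comm ((0.9:ℝ)^ℓ) (k:ℝ), ← div_div, mul_div_assoc, div_self hk0.ne', mul_one]
  rw [harg, div_div_eq_mul_div]
  have hpow : (0:ℝ) < (0.9:ℝ) ^ ℓ := by positivity
  have hlog : Real.log (500 / (0.9:ℝ) ^ ℓ) = Real.log 500 - ℓ * Real.log 0.9 := by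
    rw [Real.log_div (by norm_num) hpow.ne', Real.log_pow]
  have h500 : Real.log 500 ≤ 499 := by
    have := Real.log_le_sub_one_of_pos (by norm_num : (0:ℝ) < 500)
    linarith
  have h09 : -Real.log 0.9 ≤ 1 := by
    rw [← Real.log_inv]
    have h := Real.log_le_sub_one_of_pos (show (0:ℝ) < (0.9:ℝ)⁻¹ by norm_num)
    have : (0.9:ℝ)⁻¹ - 1 ≤ 1 := by norm_num
    linarith
  have hlogbound : Real.log (500 / (0.9:ℝ) ^ ℓ) ≤ 500 * ℓ := by
    rw [hlog]
    have h2 : ℓ * (-Real.log 0.9) ≤ (ℓ:ℝ) * 1 := mul_le_mul_of_nonneg_left h09 hℓ0.le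
    nlinarith
  have hA0 : 0 ≤ Real.log (500 / (0.9:ℝ) ^ ℓ) := by
    apply Real.log_nonneg
    rw [le_div_iff₀ hpow]
    have : (0.9:ℝ) ^ ℓ ≤ 1 := pow_le_one₀ (by norm_num) (by norm_num)
    linarith
  have hS0 : 0 ≤ Real.sqrt ((ℓ:ℝ) * (0.95:ℝ) ^ ℓ) := Real.sqrt_nonneg _
  have hsk : 0 ≤ Real.sqrt k := Real.sqrt_nonneg _
  have hr0 : (0:ℝ) ≤ (Real.sqrt 0.95) ^ ℓ := by positivity
  have hsq : Real.sqrt ((ℓ:ℝ) * (0.95:ℝ) ^ ℓ) ≤ (ℓ:ℝ) * (Real.sqrt 0.95) ^ ℓ := by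
    rw [Real.sqrt_mul (by positivity), sqrt_pow_aux _ (by norm_num)]
    have hself : Real.sqrt (ℓ:ℝ) ≤ (ℓ:ℝ) := by
      rw [Real.sqrt_le_left hℓ0.le]; nlinarith
    exact mul_le_mul_of_nonneg_right hself hr0
  rw [div_le_div_iff_of_pos_right hε]
  have h3 : Real.log (500 / (0.9:ℝ) ^ ℓ) * Real.sqrt ((ℓ:ℝ) * (0.95:ℝ) ^ ℓ)
      ≤ (500 * ℓ) * ((ℓ:ℝ) * (Real.sqrt 0.95) ^ ℓ) :=
    mul_le_mul hlogbound hsq hS0 (by positivity)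
  nlinarith [mul_le_mul_of_nonneg_right h3 hsk]

/-- The numerical computation underlying the utility analysis of the Iterative Sparse
Vector Correction algorithm: with `κ = 0.9`, `λ = 0.95`, `L = ⌈10·log(log k)/log(1/κ)⌉`,
`m_ℓ = κ^ℓ·k`, `ε_ℓ = ε₀/(√k·√(ℓ·λ^ℓ))`, and `w_ℓ = 100·log(500·k/m_ℓ)/ε_ℓ`, the sum of
the noise-width parameters satisfies `Σ_{ℓ=1}^{L+1} w_ℓ ≤ C·√k/ε₀` for an absolute
constant `C > 0`. -/
theorem iterative_svc_width_sum :
    ∃ C : ℝ, 0 < C ∧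
      ∀ (k : ℕ), 3 ≤ k → ∀ ε₀ : ℝ, 0 < ε₀ →
      let κ : ℝ := 0.9
      let lam : ℝ := 0.95
      let L : ℕ := ⌈10 * Real.log (Real.log k) / Real.log (1 / κ)⌉₊
      let m : ℕ → ℝ := fun ℓ => κ ^ ℓ * k
      let εs : ℕ → ℝ := fun ℓ => ε₀ / (Real.sqrt k * Real.sqrt (ℓ * lam ^ ℓ))
      let w : ℕ → ℝ := fun ℓ => 100 * Real.log (500 * k / m ℓ) / εs ℓ
      ∑ ℓ ∈ Finset.Icc 1 (L + 1), w ℓ ≤ C * Real.sqrt k / ε₀ := by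
  set r : ℝ := Real.sqrt 0.95 with hr_def
  have hr0 : 0 ≤ r := Real.sqrt_nonneg _
  have hr1 : r < 1 := by
    rw [hr_def, Real.sqrt_lt' one_pos]
    norm_num
  have hsummable : Summable (fun n : ℕ => (n:ℝ)^2 * r^n) := by
    have : ‖r‖ < 1 := by rwa [Real.norm_eq_abs, abs_of_nonneg hr0]
    exact summable_pow_mul_geometric_of_norm_lt_one 2 this
  set S : ℝ := ∑' n : ℕ, (n:ℝ)^2 * r^n with hS_def
  have hS0 : 0 ≤ S := tsum_nonneg (fun n => by positivity)
  refine ⟨50000 * S + 1, by positivity, ?_⟩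
  intro k hk ε₀ hε κ lam L m εs w
  have hk0 : (0:ℝ) < k := by positivity
  have hterm : ∀ ℓ ∈ Finset.Icc 1 (L + 1),
      w ℓ ≤ 50000 * (ℓ : ℝ)^2 * r^ℓ * Real.sqrt k / ε₀ := by
    intro ℓ hℓ
    have h1 : 1 ≤ ℓ := (Finset.mem_Icc.mp hℓ).1
    exact widthTermBound k hk ε₀ hε ℓ h1
  calc ∑ ℓ ∈ Finset.Icc 1 (L + 1), w ℓ
      ≤ ∑ ℓ ∈ Finset.Icc 1 (L + 1), 50000 * (ℓ : ℝ)^2 * r^ℓ * Real.sqrt k / ε₀ :=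
        Finset.sum_le_sum hterm
    _ = ∑ ℓ ∈ Finset.Icc 1 (L + 1), (ℓ : ℝ)^2 * r^ℓ * (50000 * Real.sqrt k / ε₀) :=
        Finset.sum_congr rfl (fun ℓ _ => by ring)
    _ = (∑ ℓ ∈ Finset.Icc 1 (L + 1), (ℓ : ℝ)^2 * r^ℓ) * (50000 * Real.sqrt k / ε₀) :=
        (Finset.sum_mul _ _ _).symm
    _ ≤ S * (50000 * Real.sqrt k / ε₀) :=
        mul_le_mul_of_nonneg_right
          (Summable.sum_le_tsum _ (fun n _ => by positivity) hsummable)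
          (div_nonneg (by positivity) hε.le)
    _ = 50000 * S * Real.sqrt k / ε₀ := by ring
    _ ≤ (50000 * S + 1) * Real.sqrt k / ε₀ := by
        rw [div_le_div_iff_of_pos_right hε]
        have := Real.sqrt_nonneg (k:ℝ)
        nlinarith
end

section
/- Let Ω be a type of datasets with a symmetric neighboring relation, let m ≥ 1, and for each i = 1,…,m let O_i be a measurable space and let M_i be a measurable mechanism taking a dataset X ∈ Ω together with previous outcomes (o_1,…,o_{i−1}) ∈ O_1×…×O_{i−1} and returning a probability measure on O_i. Suppose there are ε_1,…,ε_m, δ_1,…,δ_m ≥ 0 such that for every i and every fixed (o_1,…,o_{i−1}), the mechanism X ↦ M_i(X; o_1,…,o_{i−1}) is (ε_i,δ_i)-DP. Then the composed mechanism mapping X to the joint distribution of (o_1,…,o_m), where o_i is drawn from M_i(X; o_1,…,o_{i−1}) sequentially, is (ε_1 + ⋯ + ε_m, δ_1 + ⋯ + δ_m)-DP. -/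
open MeasureTheory
open scoped ENNReal NNReal

/-- The sequential (adaptive) composition of the mechanisms
`M i : ((j : Fin i) → O j) → Measure (O i)`: the joint distribution of `(o_0, …, o_{m-1})`
where `o_i` is drawn from `M i (o_0, …, o_{i-1})` sequentially. -/
noncomputable def seqCompose (O : ℕ → Type) [∀ i, MeasurableSpace (O i)]
    (M : (i : ℕ) → ((j : Fin i) → O j) → Measure (O i)) :
    (m : ℕ) → Measure ((j : Fin m) → O j)
  | 0 => Measure.dirac (fun j => j.elim0)
  | m + 1 => (seqCompose O M m).bind fun o => (M m o).map (fun x => Fin.snoc o x)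

open ENNReal in
/-- Key integral lemma: if `μ S ≤ c μ' S + d` on measurable sets, then the same holds for
lower integrals of `[0,1]`-valued measurable functions. -/
private lemma lintegral_le_of_dp {α : Type*} [MeasurableSpace α] (μ μ' : Measure α)
    (c d : ℝ≥0∞) (hc : c ≠ ⊤)
    (h : ∀ S : Set α, MeasurableSet S → μ S ≤ c * μ' S + d)
    (g : α → ℝ≥0∞) (hg : Measurable g) (hg1 : ∀ a, g a ≤ 1) :
    ∫⁻ a, g a ∂μ ≤ c * ∫⁻ a, g a ∂μ' + d := by
  set f : α → ℝ := fun a => (g a).toReal with hf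
  have hfm : Measurable f := ENNReal.measurable_toReal.comp hg
  have hof : ∀ a, ENNReal.ofReal (f a) = g a := fun a =>
    ENNReal.ofReal_toReal (ne_top_of_le_ne_top ENNReal.one_ne_top (hg1 a))
  have hf1 : ∀ a, f a ≤ 1 := by
    intro a
    have := hg1 a
    rw [hf]
    exact ENNReal.toReal_le_of_le_ofReal zero_le_one (by simpa using this)
  have hlc : ∀ ν : Measure α, ∫⁻ a, g a ∂ν = ∫⁻ t in Set.Ioi (0:ℝ), ν {a | t < f a} := by
    intro ν
    rw [← MeasureTheory.lintegral_eq_lintegral_meas_lt ν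
      (Filter.Eventually.of_forall fun a => ENNReal.toReal_nonneg) hfm.aemeasurable]
    exact lintegral_congr fun a => (hof a).symm
  have hsetm : ∀ t : ℝ, MeasurableSet {a | t < f a} := fun t =>
    measurableSet_lt measurable_const hfm
  have hsplit : ∀ ν : Measure α,
      ∫⁻ t in Set.Ioi (0:ℝ), ν {a | t < f a} = ∫⁻ t in Set.Ioc (0:ℝ) 1, ν {a | t < f a} := by
    intro ν
    have hun : Set.Ioi (0:ℝ) = Set.Ioc (0:ℝ) 1 ∪ Set.Ioi 1 :=
      (Set.Ioc_union_Ioi_eq_Ioi zero_le_one).symm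
    rw [hun, lintegral_union measurableSet_Ioi Set.Ioc_disjoint_Ioi_same]
    have hz : ∫⁻ t in Set.Ioi (1:ℝ), ν {a | t < f a} = 0 := by
      have hzero : ∀ t, t ∈ Set.Ioi (1:ℝ) → ν {a | t < f a} = (fun _ => (0:ℝ≥0∞)) t := by
        intro t ht
        have he : {a | t < f a} = ∅ := by
          ext a
          simp only [Set.mem_setOf_eq, Set.mem_empty_iff_false, iff_false, not_lt]
          exact (hf1 a).trans (le_of_lt (Set.mem_Ioi.mp ht))
        simp [he]
      rw [setLIntegral_congr_fun measurableSet_Ioi hzero]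
      simp
    rw [hz, add_zero]
  calc ∫⁻ a, g a ∂μ = ∫⁻ t in Set.Ioc (0:ℝ) 1, μ {a | t < f a} := by rw [hlc, hsplit]
    _ ≤ ∫⁻ t in Set.Ioc (0:ℝ) 1, (c * μ' {a | t < f a} + d) :=
        lintegral_mono fun t => h _ (hsetm t)
    _ = (∫⁻ t in Set.Ioc (0:ℝ) 1, c * μ' {a | t < f a}) + d := by
        rw [lintegral_add_right _ measurable_const, setLIntegral_const,
          Real.volume_Ioc, sub_zero, ENNReal.ofReal_one, mul_one]
    _ = c * (∫⁻ t in Set.Ioc (0:ℝ) 1, μ' {a | t < f a}) + d := by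
        rw [lintegral_const_mul' _ _ hc]
    _ ≤ c * (∫⁻ t in Set.Ioi (0:ℝ), μ' {a | t < f a}) + d := by
        gcongr
        exact Set.Ioc_subset_Ioi_self
    _ = c * ∫⁻ a, g a ∂μ' + d := by rw [← hlc]

private lemma measurable_snoc_pair {m : ℕ} (O : ℕ → Type) [∀ i, MeasurableSpace (O i)] :
    Measurable (fun p : ((j : Fin m) → O j) × O m =>
      (Fin.snoc p.1 p.2 : (j : Fin (m+1)) → O j)) := by
  apply measurable_pi_lambda
  intro j
  refine Fin.lastCases ?_ ?_ j
  · simpa using measurable_snd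
  · intro i
    simp
    exact (measurable_pi_apply i).comp measurable_fst

private lemma measurable_snoc_fixed {m : ℕ} (O : ℕ → Type) [∀ i, MeasurableSpace (O i)]
    (o : (j : Fin m) → O j) :
    Measurable (fun x : O m => (Fin.snoc o x : (j : Fin (m+1)) → O j)) := by
  apply measurable_pi_lambda
  intro j
  refine Fin.lastCases ?_ ?_ j
  · simp
    exact measurable_id
  · intro i
    simpa using measurable_const

private lemma measurable_map_snoc {m : ℕ} (O : ℕ → Type) [∀ i, MeasurableSpace (O i)]
    (κ : ((j : Fin m) → O j) → Measure (O m)) (hκ : Measurable κ)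
    (hκp : ∀ o, IsProbabilityMeasure (κ o)) (S : Set ((j : Fin (m+1)) → O j))
    (hS : MeasurableSet S) :
    Measurable fun o => κ o ((fun x => (Fin.snoc o x : (j : Fin (m+1)) → O j)) ⁻¹' S) := by
  let K : ProbabilityTheory.Kernel ((j : Fin m) → O j) (O m) := ⟨κ, hκ⟩
  haveI : ProbabilityTheory.IsMarkovKernel K := ⟨hκp⟩
  have ht : MeasurableSet {p : ((j : Fin m) → O j) × O m |
      (Fin.snoc p.1 p.2 : (j : Fin (m+1)) → O j) ∈ S} := (measurable_snoc_pair O) hS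
  exact ProbabilityTheory.Kernel.measurable_kernel_prodMk_left (κ := K) ht

private lemma measurable_mapped {m : ℕ} (O : ℕ → Type) [∀ i, MeasurableSpace (O i)]
    (κ : ((j : Fin m) → O j) → Measure (O m)) (hκ : Measurable κ)
    (hκp : ∀ o, IsProbabilityMeasure (κ o)) :
    Measurable fun o => (κ o).map (fun x => (Fin.snoc o x : (j : Fin (m+1)) → O j)) := by
  apply Measure.measurable_of_measurable_coe
  intro s hs
  have heq : (fun o => ((κ o).map (fun x => (Fin.snoc o x : (j : Fin (m+1)) → O j))) s)
      = fun o => κ o ((fun x => (Fin.snoc o x : (j : Fin (m+1)) → O j)) ⁻¹' s) :=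
    funext fun o => Measure.map_apply (measurable_snoc_fixed O o) hs
  rw [heq]
  exact measurable_map_snoc O κ hκ hκp s hs

private lemma seqCompose_prob (O : ℕ → Type) [∀ i, MeasurableSpace (O i)]
    (M : (i : ℕ) → ((j : Fin i) → O j) → Measure (O i)) :
    ∀ m : ℕ, (∀ i, i < m → ∀ o, IsProbabilityMeasure (M i o)) →
      (∀ i, i < m → Measurable (M i)) → IsProbabilityMeasure (seqCompose O M m) := by
  intro m
  induction m with
  | zero => intro _ _; rw [seqCompose]; infer_instance
  | succ m ih =>
    intro hp hm
    haveI hprev := ih (fun i hi => hp i (hi.trans m.lt_succ_self))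
      (fun i hi => hm i (hi.trans m.lt_succ_self))
    constructor
    rw [seqCompose, Measure.bind_apply MeasurableSet.univ
      (measurable_mapped O _ (hm m m.lt_succ_self) (hp m m.lt_succ_self)).aemeasurable]
    have hone : ∀ o : (j : Fin m) → O j,
        ((M m o).map (fun x => (Fin.snoc o x : (j : Fin (m+1)) → O j))) Set.univ = 1 := by
      intro o
      haveI := hp m m.lt_succ_self o
      haveI : IsProbabilityMeasure ((M m o).map
          (fun x => (Fin.snoc o x : (j : Fin (m+1)) → O j))) :=
        Measure.isProbabilityMeasure_map (measurable_snoc_fixed O o).aemeasurable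
      exact measure_univ
    rw [lintegral_congr hone, lintegral_one, measure_univ]

private lemma basic_composition_aux (Ω : Type) (N : Ω → Ω → Prop)
    (O : ℕ → Type) [∀ i, MeasurableSpace (O i)]
    (M : (i : ℕ) → Ω → ((j : Fin i) → O j) → Measure (O i)) (ε δ : ℕ → ℝ) :
    ∀ m : ℕ, (∀ i, i < m → 0 ≤ ε i) → (∀ i, i < m → 0 ≤ δ i) →
      (∀ i, i < m → ∀ X o, IsProbabilityMeasure (M i X o)) →
      (∀ i, i < m → ∀ X, Measurable fun o => M i X o) →
      (∀ i, i < m → ∀ o, IsDP N (fun X => M i X o) (ε i) (δ i)) →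
      IsDP N (fun X => seqCompose O (fun i o => M i X o) m)
        (∑ i ∈ Finset.range m, ε i) (∑ i ∈ Finset.range m, δ i) := by
  intro m
  induction m with
  | zero =>
    intro _ _ _ _ _ X X' hN S hS
    simp [seqCompose, Real.exp_zero]
  | succ m ih =>
    intro hε hδ hprob hmeas hDP X X' hN S hS
    have hm := m.lt_succ_self
    have IH := ih (fun i hi => hε i (hi.trans hm)) (fun i hi => hδ i (hi.trans hm))
      (fun i hi => hprob i (hi.trans hm)) (fun i hi => hmeas i (hi.trans hm))
      (fun i hi => hDP i (hi.trans hm)) X X' hN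
    set c := ENNReal.ofReal (Real.exp (ε m)) with hc
    set d := ENNReal.ofReal (δ m) with hd
    set Cs := ENNReal.ofReal (Real.exp (∑ i ∈ Finset.range m, ε i)) with hCs
    set Ds := ENNReal.ofReal (∑ i ∈ Finset.range m, δ i) with hDs
    set μX := seqCompose O (fun i o => M i X o) m with hμX
    set μX' := seqCompose O (fun i o => M i X' o) m with hμX'
    haveI hPX : IsProbabilityMeasure μX := seqCompose_prob O _ m
      (fun i hi o => hprob i (hi.trans hm) X o) (fun i hi => hmeas i (hi.trans hm) X)
    haveI hPX' : IsProbabilityMeasure μX' := seqCompose_prob O _ m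
      (fun i hi o => hprob i (hi.trans hm) X' o) (fun i hi => hmeas i (hi.trans hm) X')
    have hbind : ∀ Y : Ω, seqCompose O (fun i o => M i Y o) (m+1) S
        = ∫⁻ o, (M m Y o) ((fun x => (Fin.snoc o x : (j : Fin (m+1)) → O j)) ⁻¹' S)
            ∂(seqCompose O (fun i o => M i Y o) m) := by
      intro Y
      rw [seqCompose, Measure.bind_apply hS
        (measurable_mapped O _ (hmeas m hm Y) (hprob m hm Y)).aemeasurable]
      exact lintegral_congr fun o => Measure.map_apply (measurable_snoc_fixed O o) hS
    set g : ((j : Fin m) → O j) → ℝ≥0∞ := fun o =>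
      min 1 (c * M m X' o ((fun x => (Fin.snoc o x : (j : Fin (m+1)) → O j)) ⁻¹' S)) with hg
    have hgm : Measurable g := measurable_const.min
      ((measurable_map_snoc O (fun o => M m X' o) (hmeas m hm X') (hprob m hm X') S hS).const_mul c)
    have hfXle : ∀ o, M m X o ((fun x => (Fin.snoc o x : (j : Fin (m+1)) → O j)) ⁻¹' S)
        ≤ g o + d := by
      intro o
      haveI := hprob m hm X o
      have h1 : M m X o ((fun x => (Fin.snoc o x : (j : Fin (m+1)) → O j)) ⁻¹' S) ≤ 1 :=
        prob_le_one
      have h2 := hDP m hm o X X' hN _ ((measurable_snoc_fixed O o) hS)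
      calc M m X o _ ≤ min 1 (c * M m X' o ((fun x =>
            (Fin.snoc o x : (j : Fin (m+1)) → O j)) ⁻¹' S) + d) := le_min h1 h2
        _ ≤ min (1 + d) (c * M m X' o ((fun x =>
            (Fin.snoc o x : (j : Fin (m+1)) → O j)) ⁻¹' S) + d) :=
          min_le_min (self_le_add_right 1 d) le_rfl
        _ = g o + d := min_add_add_right _ _ _
    have key := lintegral_le_of_dp μX μX' Cs Ds ENNReal.ofReal_ne_top IH g hgm
      (fun o => min_le_left _ _)
    have hg' : ∫⁻ o, g o ∂μX' ≤ c * seqCompose O (fun i o => M i X' o) (m+1) S := by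
      rw [hbind X', ← lintegral_const_mul' _ _ (hc ▸ ENNReal.ofReal_ne_top)]
      exact lintegral_mono fun o => min_le_right _ _
    calc seqCompose O (fun i o => M i X o) (m+1) S
        = ∫⁻ o, M m X o ((fun x => (Fin.snoc o x : (j : Fin (m+1)) → O j)) ⁻¹' S) ∂μX :=
          hbind X
      _ ≤ ∫⁻ o, (g o + d) ∂μX := lintegral_mono hfXle
      _ = ∫⁻ o, g o ∂μX + d := by
          rw [lintegral_add_right _ measurable_const, lintegral_const, measure_univ, mul_one]
      _ ≤ (Cs * ∫⁻ o, g o ∂μX' + Ds) + d := add_le_add_left key d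
      _ ≤ (Cs * (c * seqCompose O (fun i o => M i X' o) (m+1) S) + Ds) + d := by gcongr
      _ = ENNReal.ofReal (Real.exp (∑ i ∈ Finset.range (m+1), ε i))
            * seqCompose O (fun i o => M i X' o) (m+1) S
          + ENNReal.ofReal (∑ i ∈ Finset.range (m+1), δ i) := by
          rw [Finset.sum_range_succ, Finset.sum_range_succ, Real.exp_add,
            ENNReal.ofReal_mul (Real.exp_nonneg _),
            ENNReal.ofReal_add (Finset.sum_nonneg fun i hi =>
              hδ i ((Finset.mem_range.mp hi).trans hm)) (hδ m hm), hc, hCs, hd, hDs]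
          ring

/-- Basic composition: the sequential (adaptive) composition of `m` mechanisms, the `i`-th
of which is `(ε i, δ i)`-DP for every fixed tuple of previous outcomes, is
`(ε 0 + ⋯ + ε (m-1), δ 0 + ⋯ + δ (m-1))`-DP. -/
theorem basic_composition (Ω : Type) (N : Ω → Ω → Prop) (hsym : ∀ X X', N X X' → N X' X)
    (m : ℕ) (hm : 1 ≤ m) (O : ℕ → Type) [∀ i, MeasurableSpace (O i)]
    (M : (i : ℕ) → Ω → ((j : Fin i) → O j) → Measure (O i))
    (ε δ : ℕ → ℝ) (hε : ∀ i, i < m → 0 ≤ ε i) (hδ : ∀ i, i < m → 0 ≤ δ i)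
    (hprob : ∀ i, i < m → ∀ X o, IsProbabilityMeasure (M i X o))
    (hmeas : ∀ i, i < m → ∀ X, Measurable fun o => M i X o)
    (hDP : ∀ i, i < m → ∀ o, IsDP N (fun X => M i X o) (ε i) (δ i)) :
    IsDP N (fun X => seqCompose O (fun i o => M i X o) m)
      (∑ i ∈ Finset.range m, ε i) (∑ i ∈ Finset.range m, δ i) := by
  exact basic_composition_aux Ω N O M ε δ m hε hδ hprob hmeas hDP
end

section
/- Let Ω be a type of datasets with a symmetric neighboring relation, let m ≥ 1 and ε > 0, and for each i = 1,…,m let O_i be a measurable space and let M_i be a measurable mechanism taking a dataset X ∈ Ω together with previous outcomes (o_1,…,o_{i−1}) ∈ O_1×…×O_{i−1} and returning a probability measure on O_i, such that for every i and every fixed (o_1,…,o_{i−1}), the mechanism X ↦ M_i(X; o_1,…,o_{i−1}) is ε-DP (i.e., (ε,0)-DP). Then for every δ' > 0, the composed mechanism mapping X to the joint distribution of (o_1,…,o_m), where o_i is drawn from M_i(X; o_1,…,o_{i−1}) sequentially, is (ε', δ')-DP with ε' = √(2·m·log(1/δ'))·ε + m·ε·(e^ε − 1). -/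
open MeasureTheory

open scoped ENNReal


lemma sinh_le_mul_cosh {x : ℝ} (hx : 0 ≤ x) : Real.sinh x ≤ x * Real.cosh x := by
  have hmono : MonotoneOn (fun t => t * Real.cosh t - Real.sinh t) (Set.Ici (0:ℝ)) := by
    apply monotoneOn_of_deriv_nonneg (convex_Ici 0)
    · fun_prop
    · intro y hy
      exact (((differentiable_id.mul Real.differentiable_cosh).sub
        Real.differentiable_sinh) y).differentiableWithinAt
    · intro y hy
      have h1 : HasDerivAt (fun t => t * Real.cosh t - Real.sinh t)
          (1 * Real.cosh y + y * Real.sinh y - Real.cosh y) y :=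
        ((hasDerivAt_id y).mul (Real.hasDerivAt_cosh y)).sub (Real.hasDerivAt_sinh y)
      rw [h1.deriv]
      have : (0:ℝ) ≤ y := le_of_lt (by simpa using hy)
      nlinarith [Real.sinh_nonneg_iff.mpr this]
  have h0 := hmono (Set.self_mem_Ici) (Set.mem_Ici.mpr hx) hx
  simp only [Real.sinh_zero, Real.cosh_zero, zero_mul, sub_zero] at h0
  linarith

lemma twopoint_hoeffding {θ μ : ℝ} (hθ0 : 0 ≤ θ) (hμ : 0 ≤ μ) :
    (1+θ)/2 * Real.exp μ + (1-θ)/2 * Real.exp (-μ) ≤ Real.exp (θ*μ + μ^2/2) := by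
  have h1 : (1+θ)/2 * Real.exp μ + (1-θ)/2 * Real.exp (-μ)
      = Real.cosh μ + θ * Real.sinh μ := by
    rw [Real.cosh_eq, Real.sinh_eq]; ring
  have h2 : Real.cosh μ + θ * Real.sinh μ ≤ Real.cosh μ * (1 + θ*μ) := by
    have := sinh_le_mul_cosh hμ
    nlinarith [Real.cosh_pos μ]
  have h3 : Real.cosh μ * (1 + θ*μ) ≤ Real.exp (μ^2/2) * Real.exp (θ*μ) := by
    have hc := Real.cosh_le_exp_half_sq μ
    have he := Real.add_one_le_exp (θ*μ)
    have h4 : (0:ℝ) ≤ 1 + θ*μ := by nlinarith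
    have := Real.cosh_pos μ
    nlinarith [Real.exp_pos (μ^2/2)]
  rw [h1]
  calc Real.cosh μ + θ * Real.sinh μ ≤ Real.cosh μ * (1 + θ*μ) := h2
    _ ≤ Real.exp (μ^2/2) * Real.exp (θ*μ) := h3
    _ = Real.exp (θ*μ + μ^2/2) := by rw [← Real.exp_add]; ring_nf

section aux
variable {O : ℕ → Type} [∀ i, MeasurableSpace (O i)]

lemma measurable_snoc (k : ℕ) :
    Measurable (fun p : ((j : Fin k) → O j) × O k =>
      (Fin.snoc p.1 p.2 : (j : Fin (k+1)) → O j)) := by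
  apply measurable_pi_lambda
  intro j
  refine Fin.lastCases ?_ ?_ j
  · simp only [Fin.snoc_last]; exact measurable_snd
  · intro i
    simp only [Fin.snoc_castSucc]
    exact (measurable_pi_apply i).comp measurable_fst

lemma measurable_map_snoc_s15 {k : ℕ} (κ : ((j : Fin k) → O j) → Measure (O k))
    (hκ : Measurable κ) (hp : ∀ o, IsProbabilityMeasure (κ o)) :
    Measurable (fun o => ((κ o).map (fun x => Fin.snoc o x) :
      Measure ((j : Fin (k+1)) → O j))) := by
  apply Measure.measurable_of_measurable_coe
  intro S hS
  have heq : ∀ o, (κ o).map (fun x => Fin.snoc o x) S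
      = κ o {x | (Fin.snoc o x : (j : Fin (k+1)) → O j) ∈ S} := by
    intro o
    exact Measure.map_apply ((measurable_snoc k).comp measurable_prodMk_left) hS
  simp only [heq]
  let K : ProbabilityTheory.Kernel ((j : Fin k) → O j) (O k) := ⟨κ, hκ⟩
  haveI : ProbabilityTheory.IsMarkovKernel K := ⟨hp⟩
  exact ProbabilityTheory.Kernel.measurable_kernel_prodMk_left (κ := K)
    ((measurable_snoc k) hS)

lemma isProbabilityMeasure_bind {α β : Type*} [MeasurableSpace α] [MeasurableSpace β]
    {μ : Measure α} [IsProbabilityMeasure μ] {f : α → Measure β} (hf : Measurable f)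
    (hp : ∀ a, IsProbabilityMeasure (f a)) : IsProbabilityMeasure (μ.bind f) := by
  constructor
  rw [Measure.bind_apply MeasurableSet.univ hf.aemeasurable]
  simp [measure_univ]

lemma isProb_seqCompose (κ : (i : ℕ) → ((j : Fin i) → O j) → Measure (O i)) (k : ℕ)
    (hm : ∀ i, i < k → Measurable (κ i))
    (hp : ∀ i, i < k → ∀ o, IsProbabilityMeasure (κ i o)) :
    IsProbabilityMeasure (seqCompose O κ k) := by
  induction k with
  | zero => rw [seqCompose]; exact Measure.dirac.isProbabilityMeasure
  | succ n ih =>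
    haveI := ih (fun i hi => hm i (hi.trans (Nat.lt_succ_self n)))
      (fun i hi => hp i (hi.trans (Nat.lt_succ_self n)))
    rw [seqCompose]
    haveI : ∀ o, IsProbabilityMeasure (κ n o) := hp n (Nat.lt_succ_self n)
    exact _root_.isProbabilityMeasure_bind
      (measurable_map_snoc_s15 _ (hm n (Nat.lt_succ_self n)) (fun o => this o))
      (fun o => Measure.isProbabilityMeasure_map ((measurable_snoc n).comp
        measurable_prodMk_left).aemeasurable)

end aux


lemma decomp_apply {α : Type*} [MeasurableSpace α] {μ ν : Measure α}
    [IsProbabilityMeasure μ] [IsProbabilityMeasure ν] {E : ℝ} (hE : 1 < E)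
    (h2 : ∀ S, MeasurableSet S → ν S ≤ ENNReal.ofReal E * μ S)
    {S : Set α} (hS : MeasurableSet S) :
    ((ENNReal.ofReal (E-1))⁻¹ • (ENNReal.ofReal E • μ - ν)) S
      = ENNReal.ofReal ((E-1)⁻¹ * (E * (μ S).toReal - (ν S).toReal)) := by
  have hE0 : (0:ℝ) ≤ E := by linarith
  have hle : ν ≤ ENNReal.ofReal E • μ := by
    rw [Measure.le_iff]
    intro s hs
    simpa [Measure.smul_apply, smul_eq_mul] using h2 s hs
  have hx : μ S ≠ ⊤ := measure_ne_top μ S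
  have hy : ν S ≠ ⊤ := measure_ne_top ν S
  rw [Measure.smul_apply, Measure.sub_apply hS hle, Measure.smul_apply, smul_eq_mul,
    smul_eq_mul, ENNReal.ofReal_mul (inv_nonneg.mpr (by linarith : (0:ℝ) ≤ E - 1)),
    ENNReal.ofReal_sub _ ENNReal.toReal_nonneg, ENNReal.ofReal_mul hE0,
    ENNReal.ofReal_toReal hx, ENNReal.ofReal_toReal hy,
    ← ENNReal.ofReal_inv_of_pos (by linarith : (0:ℝ) < E - 1)]

lemma decomp_toReal_le {α : Type*} [MeasurableSpace α] {μ ν : Measure α}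
    [IsProbabilityMeasure μ] [IsProbabilityMeasure ν] {E : ℝ} (hE0 : 0 ≤ E)
    (h2 : ∀ S, MeasurableSet S → ν S ≤ ENNReal.ofReal E * μ S)
    {S : Set α} (hS : MeasurableSet S) : (ν S).toReal ≤ E * (μ S).toReal := by
  have := h2 S hS
  have h3 : (ENNReal.ofReal E * μ S).toReal = E * (μ S).toReal := by
    rw [ENNReal.toReal_mul, ENNReal.toReal_ofReal hE0]
  calc (ν S).toReal ≤ (ENNReal.ofReal E * μ S).toReal := by
        apply ENNReal.toReal_mono _ this
        exact ENNReal.mul_ne_top ENNReal.ofReal_ne_top (measure_ne_top μ S)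
    _ = E * (μ S).toReal := h3

lemma decomp_prob {α : Type*} [MeasurableSpace α] {μ ν : Measure α}
    [IsProbabilityMeasure μ] [IsProbabilityMeasure ν] {E : ℝ} (hE : 1 < E)
    (h2 : ∀ S, MeasurableSet S → ν S ≤ ENNReal.ofReal E * μ S) :
    IsProbabilityMeasure ((ENNReal.ofReal (E-1))⁻¹ • (ENNReal.ofReal E • μ - ν)) := by
  constructor
  rw [decomp_apply hE h2 MeasurableSet.univ]
  simp only [measure_univ, ENNReal.toReal_one]
  rw [show (E-1)⁻¹ * (E * 1 - 1) = 1 by rw [mul_one]; exact inv_mul_cancel₀ (by linarith)]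
  exact ENNReal.ofReal_one

lemma decomp_mix {α : Type*} [MeasurableSpace α] {μ ν : Measure α}
    [IsProbabilityMeasure μ] [IsProbabilityMeasure ν] {E : ℝ} (hE : 1 < E)
    (h1 : ∀ S, MeasurableSet S → μ S ≤ ENNReal.ofReal E * ν S)
    (h2 : ∀ S, MeasurableSet S → ν S ≤ ENNReal.ofReal E * μ S) :
    ENNReal.ofReal (E/(E+1)) • ((ENNReal.ofReal (E-1))⁻¹ • (ENNReal.ofReal E • μ - ν))
      + ENNReal.ofReal (1/(E+1)) • ((ENNReal.ofReal (E-1))⁻¹ • (ENNReal.ofReal E • ν - μ))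
      = μ := by
  have hE0 : (0:ℝ) ≤ E := by linarith
  ext S hS
  have e1 := decomp_apply hE h2 hS
  have e2 := decomp_apply hE h1 hS
  simp only [Measure.smul_apply, smul_eq_mul] at e1 e2
  simp only [Measure.add_apply, Measure.smul_apply, smul_eq_mul]
  rw [e1, e2]
  set x := (μ S).toReal with hxdef
  set y := (ν S).toReal with hydef
  have hxy : y ≤ E * x := decomp_toReal_le hE0 h2 hS
  have hyx : x ≤ E * y := decomp_toReal_le hE0 h1 hS
  have hx0 : 0 ≤ x := ENNReal.toReal_nonneg
  have hy0 : 0 ≤ y := ENNReal.toReal_nonneg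
  have hinv : (0:ℝ) ≤ (E-1)⁻¹ := inv_nonneg.mpr (by linarith)
  rw [← ENNReal.ofReal_mul (div_nonneg (by linarith) (by linarith)),
    ← ENNReal.ofReal_mul (div_nonneg (by linarith) (by linarith)),
    ← ENNReal.ofReal_add
      (mul_nonneg (div_nonneg (by linarith) (by linarith))
        (mul_nonneg hinv (by linarith)))
      (mul_nonneg (div_nonneg (by linarith) (by linarith))
        (mul_nonneg hinv (by linarith))),
    show E/(E+1) * ((E-1)⁻¹ * (E * x - y)) + 1/(E+1) * ((E-1)⁻¹ * (E * y - x)) = x by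
      have hne1 : E - 1 ≠ 0 := by linarith
      have hne2 : E + 1 ≠ 0 := by linarith
      field_simp
      ring]
  exact ENNReal.ofReal_toReal (measure_ne_top μ S)

section mixture
variable {O : ℕ → Type} [∀ i, MeasurableSpace (O i)]

lemma sum_snoc_bool {M : Type*} [AddCommMonoid M] (n : ℕ) (g : (Fin (n+1) → Bool) → M) :
    ∑ c' : Fin (n+1) → Bool, g c'
      = ∑ c : Fin n → Bool, (g (Fin.snoc c false) + g (Fin.snoc c true)) := by
  rw [← Equiv.sum_comp (Fin.snocEquiv (fun _ => Bool)) g, Fintype.sum_prod_type,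
    Fintype.sum_bool, ← Finset.sum_add_distrib]
  refine Finset.sum_congr rfl (fun c _ => ?_)
  exact add_comm _ _

lemma map_mix_apply {α β : Type*} [MeasurableSpace α] [MeasurableSpace β]
    (f : α → β) (hf : Measurable f) (μ ν : Measure α) (w1 w2 : ℝ≥0∞)
    {S : Set β} (hS : MeasurableSet S) :
    (Measure.map f (w1 • μ + w2 • ν)) S
      = w1 * (Measure.map f μ) S + w2 * (Measure.map f ν) S := by
  rw [Measure.map_apply hf hS, Measure.map_apply hf hS, Measure.map_apply hf hS,
    Measure.add_apply, Measure.smul_apply, Measure.smul_apply, smul_eq_mul, smul_eq_mul]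

lemma mixture (γA γB : (i : ℕ) → ((j : Fin i) → O j) → Measure (O i)) :
    ∀ (k : ℕ) (κ κ' : (i : ℕ) → ((j : Fin i) → O j) → Measure (O i)) (wA wB wA' wB' : ℝ≥0∞),
    (∀ i, i < k → ∀ o, κ i o = wA • γA i o + wB • γB i o) →
    (∀ i, i < k → ∀ o, κ' i o = wA' • γA i o + wB' • γB i o) →
    (∀ i, i < k → ∀ o, IsProbabilityMeasure (γA i o)) →
    (∀ i, i < k → ∀ o, IsProbabilityMeasure (γB i o)) →
    (∀ i, i < k → Measurable (γA i)) → (∀ i, i < k → Measurable (γB i)) →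
    ∃ ν : (Fin k → Bool) → Measure ((j : Fin k) → O j),
      (∀ c, IsProbabilityMeasure (ν c)) ∧
      seqCompose O κ k = ∑ c : Fin k → Bool, (∏ i, bif c i then wB else wA) • ν c ∧
      seqCompose O κ' k = ∑ c : Fin k → Bool, (∏ i, bif c i then wB' else wA') • ν c := by
  intro k
  induction k with
  | zero =>
    intro κ κ' wA wB wA' wB' _ _ _ _ _ _
    refine ⟨fun _ => Measure.dirac (fun j => j.elim0),
      fun _ => Measure.dirac.isProbabilityMeasure, ?_, ?_⟩ <;>
      simp [seqCompose, Finset.univ_unique]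
  | succ n IH =>
    intro κ κ' wA wB wA' wB' hdec hdec' hpA hpB hmA hmB
    obtain ⟨ν, hν, hP, hQ⟩ := IH κ κ' wA wB wA' wB'
      (fun i hi => hdec i (hi.trans (Nat.lt_succ_self n)))
      (fun i hi => hdec' i (hi.trans (Nat.lt_succ_self n)))
      (fun i hi => hpA i (hi.trans (Nat.lt_succ_self n)))
      (fun i hi => hpB i (hi.trans (Nat.lt_succ_self n)))
      (fun i hi => hmA i (hi.trans (Nat.lt_succ_self n)))
      (fun i hi => hmB i (hi.trans (Nat.lt_succ_self n)))
    have hlt := Nat.lt_succ_self n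
    haveI : ∀ c, IsProbabilityMeasure (ν c) := hν
    haveI hpA' : ∀ o, IsProbabilityMeasure (γA n o) := hpA n hlt
    haveI hpB' : ∀ o, IsProbabilityMeasure (γB n o) := hpB n hlt
    set FA : ((j : Fin n) → O j) → Measure ((j : Fin (n+1)) → O j) :=
      fun o => (γA n o).map (fun x => Fin.snoc o x) with hFAdef
    set FB : ((j : Fin n) → O j) → Measure ((j : Fin (n+1)) → O j) :=
      fun o => (γB n o).map (fun x => Fin.snoc o x) with hFBdef
    have hsnocm : ∀ o : (j : Fin n) → O j,
        Measurable (fun x : O n => (Fin.snoc o x : (j : Fin (n+1)) → O j)) :=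
      fun o => (measurable_snoc n).comp measurable_prodMk_left
    have hFA : Measurable FA := measurable_map_snoc_s15 _ (hmA n hlt) hpA'
    have hFB : Measurable FB := measurable_map_snoc_s15 _ (hmB n hlt) hpB'
    set ν' : (Fin (n+1) → Bool) → Measure ((j : Fin (n+1)) → O j) :=
      fun c => (ν (fun i => c i.castSucc)).bind (bif c (Fin.last n) then FB else FA)
      with hν'def
    have key : ∀ (κ0 : (i : ℕ) → ((j : Fin i) → O j) → Measure (O i)) (w1 w2 : ℝ≥0∞),
        (∀ o, κ0 n o = w1 • γA n o + w2 • γB n o) →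
        seqCompose O κ0 n = (∑ c : Fin n → Bool, (∏ i, bif c i then w2 else w1) • ν c) →
        seqCompose O κ0 (n+1)
          = ∑ c' : Fin (n+1) → Bool, (∏ i, bif c' i then w2 else w1) • ν' c' := by
      intro κ0 w1 w2 hdec0 hIH0
      have hkm : Measurable (fun o => w1 • FA o + w2 • FB o) := by
        apply Measure.measurable_of_measurable_coe
        intro S hS
        simp only [Measure.add_apply, Measure.smul_apply, smul_eq_mul]
        exact (((Measure.measurable_coe hS).comp hFA).const_mul w1).add
          (((Measure.measurable_coe hS).comp hFB).const_mul w2)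
      have hker : (fun o => (κ0 n o).map (fun x => Fin.snoc o x))
          = fun o => w1 • FA o + w2 • FB o := by
        funext o
        rw [hdec0 o]
        ext S hS
        have hRHS : (w1 • FA o + w2 • FB o) S = w1 * (FA o) S + w2 * (FB o) S := by
          simp only [Measure.add_apply, Measure.smul_apply, smul_eq_mul]
        exact (map_mix_apply _ (hsnocm o) (γA n o) (γB n o) w1 w2 hS).trans hRHS.symm
      ext S hS
      rw [show seqCompose O κ0 (n+1)
          = (seqCompose O κ0 n).bind (fun o => (κ0 n o).map (fun x => Fin.snoc o x)) from rfl,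
        hker, hIH0, Measure.bind_apply hS hkm.aemeasurable, lintegral_finset_sum_measure]
      have hFAS : Measurable (fun o => FA o S) := (Measure.measurable_coe hS).comp hFA
      have hFBS : Measurable (fun o => FB o S) := (Measure.measurable_coe hS).comp hFB
      have hterm : ∀ c : Fin n → Bool,
          ∫⁻ o, (w1 • FA o + w2 • FB o) S ∂((∏ i, bif c i then w2 else w1) • ν c)
          = (∏ i, bif c i then w2 else w1) *
            (w1 * ((ν c).bind FA) S + w2 * ((ν c).bind FB) S) := by
        intro c
        rw [lintegral_smul_measure]
        congr 1
        simp only [Measure.add_apply, Measure.smul_apply, smul_eq_mul]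
        rw [lintegral_add_left (hFAS.const_mul w1),
          lintegral_const_mul w1 hFAS, lintegral_const_mul w2 hFBS,
          Measure.bind_apply hS hFA.aemeasurable, Measure.bind_apply hS hFB.aemeasurable]
      rw [Finset.sum_congr rfl (fun c _ => hterm c),
        Measure.finset_sum_apply,
        sum_snoc_bool n (fun c' => ((∏ i, bif c' i then w2 else w1) • ν' c') S)]
      refine Finset.sum_congr rfl (fun c _ => ?_)
      have hrestrict : ∀ b : Bool, (fun i => (Fin.snoc c b : Fin (n+1) → Bool) i.castSucc) = c := by
        intro b; funext i; simp [Fin.snoc_castSucc]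
      have hprodsnoc : ∀ b : Bool, (∏ i, bif (Fin.snoc c b : Fin (n+1) → Bool) i then w2 else w1)
          = (∏ i, bif c i then w2 else w1) * (bif b then w2 else w1) := by
        intro b
        rw [Fin.prod_univ_castSucc]
        simp [Fin.snoc_castSucc, Fin.snoc_last]
      simp only [Measure.smul_apply, smul_eq_mul, hν'def, hrestrict, hprodsnoc,
        Fin.snoc_last, cond_false, cond_true]
      ring
    refine ⟨ν', ?_, key κ wA wB (hdec n hlt) hP, key κ' wA' wB' (hdec' n hlt) hQ⟩
    intro c
    rw [hν'def]
    cases hb : c (Fin.last n) <;> simp only [hb, cond_true, cond_false]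
    · exact _root_.isProbabilityMeasure_bind hFA (fun o => Measure.isProbabilityMeasure_map
        (hsnocm o).aemeasurable)
    · exact _root_.isProbabilityMeasure_bind hFB (fun o => Measure.isProbabilityMeasure_map
        (hsnocm o).aemeasurable)
end mixture


lemma sum_snoc_bool' {M : Type*} [AddCommMonoid M] (n : ℕ) (g : (Fin (n+1) → Bool) → M) :
    ∑ c' : Fin (n+1) → Bool, g c'
      = ∑ c : Fin n → Bool, (g (Fin.snoc c false) + g (Fin.snoc c true)) := by
  rw [← Equiv.sum_comp (Fin.snocEquiv (fun _ => Bool)) g, Fintype.sum_prod_type,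
    Fintype.sum_bool, ← Finset.sum_add_distrib]
  refine Finset.sum_congr rfl (fun c _ => ?_)
  exact add_comm _ _

lemma sum_prod_bool (n : ℕ) (g : Bool → ℝ) :
    ∑ c : Fin n → Bool, ∏ i, g (c i) = (g false + g true)^n := by
  induction n with
  | zero => simp
  | succ k ih =>
    rw [sum_snoc_bool' k (fun c => ∏ i, g (c i))]
    have hterm : ∀ c : Fin k → Bool,
        (∏ i, g ((Fin.snoc c false : Fin (k+1) → Bool) i))
          + (∏ i, g ((Fin.snoc c true : Fin (k+1) → Bool) i))
        = (∏ i, g (c i)) * (g false + g true) := by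
      intro c
      rw [Fin.prod_univ_castSucc, Fin.prod_univ_castSucc]
      simp only [Fin.snoc_castSucc, Fin.snoc_last]
      ring
    rw [Finset.sum_congr rfl (fun c _ => hterm c), ← Finset.sum_mul, ih, pow_succ]

lemma prod_cond_pow {m : ℕ} (x y : ℝ) (c : Fin m → Bool) :
    (∏ i, bif c i then x else y)
      = x ^ (Finset.univ.filter (fun i => c i = true)).card
        * y ^ (m - (Finset.univ.filter (fun i => c i = true)).card) := by
  have h1 : (∏ i, bif c i then x else y)
      = ∏ i, (if c i = true then x else y) := by
    refine Finset.prod_congr rfl (fun i _ => ?_)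
    cases c i <;> simp
  rw [h1, Finset.prod_ite, Finset.prod_const, Finset.prod_const]
  congr 2
  have := Finset.card_filter_add_card_filter_not
    (s := (Finset.univ : Finset (Fin m))) (p := fun i => c i = true)
  simp only [Finset.card_univ, Fintype.card_fin] at this
  omega

lemma card_filter_le_m {m : ℕ} (c : Fin m → Bool) :
    (Finset.univ.filter (fun i => c i = true)).card ≤ m := by
  calc (Finset.univ.filter (fun i => c i = true)).card
      ≤ (Finset.univ : Finset (Fin m)).card := Finset.card_filter_le _ _
    _ = m := by simp

lemma good_bound {m : ℕ} {ε ε'' : ℝ} (hε : 0 < ε) (c : Fin m → Bool)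
    (h : ((m:ℝ) - 2*((Finset.univ.filter (fun i => c i = true)).card : ℝ)) * ε ≤ ε'') :
    (∏ i, bif c i then 1/(Real.exp ε+1) else Real.exp ε/(Real.exp ε+1))
      ≤ Real.exp ε'' * (∏ i, bif c i then Real.exp ε/(Real.exp ε+1) else 1/(Real.exp ε+1)) := by
  set E := Real.exp ε with hEdef
  have hE1 : 1 < E := by rw [hEdef, ← Real.exp_zero]; exact Real.exp_lt_exp.mpr hε
  set Z := (Finset.univ.filter (fun i => c i = true)).card with hZdef
  have hZm : Z ≤ m := card_filter_le_m c
  rw [prod_cond_pow, prod_cond_pow, ← hZdef]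
  have hq0 : (0:ℝ) < 1/(E+1) := by positivity
  have ha : E/(E+1) = E * (1/(E+1)) := by ring
  rw [ha, mul_pow, mul_pow]
  have hEpow : ∀ n : ℕ, E ^ n = Real.exp (n * ε) := by
    intro n; rw [hEdef, Real.exp_nat_mul]
  rw [hEpow, hEpow]
  have hcast : ((m - Z : ℕ):ℝ) = (m:ℝ) - (Z:ℝ) := by
    rw [Nat.cast_sub hZm]
  have hkey : Real.exp (((m - Z:ℕ)) * ε) ≤ Real.exp ε'' * Real.exp ((Z:ℝ) * ε) := by
    rw [← Real.exp_add]
    apply Real.exp_le_exp.mpr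
    rw [hcast]
    nlinarith [h]
  calc (1/(E+1))^Z * (Real.exp (((m-Z:ℕ)) * ε) * (1/(E+1))^(m-Z))
      = Real.exp (((m-Z:ℕ)) * ε) * ((1/(E+1))^Z * (1/(E+1))^(m-Z)) := by ring
    _ ≤ (Real.exp ε'' * Real.exp ((Z:ℝ) * ε)) * ((1/(E+1))^Z * (1/(E+1))^(m-Z)) := by
        apply mul_le_mul_of_nonneg_right hkey; positivity
    _ = Real.exp ε'' * (Real.exp ((Z:ℝ) * ε) * (1/(E+1))^Z * (1/(E+1))^(m-Z)) := by ring

set_option maxHeartbeats 1000000 in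
lemma chernoff_bad_sum (m : ℕ) (hm : 1 ≤ m) {ε δ' : ℝ} (hε : 0 < ε) (hδ0 : 0 < δ')
    (hδ1 : δ' < 1) :
    ∑ c ∈ Finset.univ.filter (fun c : Fin m → Bool =>
      ¬ (((m:ℝ) - 2*((Finset.univ.filter (fun i => c i = true)).card : ℝ)) * ε
          ≤ Real.sqrt (2*m*Real.log (1/δ')) * ε + m*ε*(Real.exp ε - 1))),
      (∏ i, bif c i then 1/(Real.exp ε+1) else Real.exp ε/(Real.exp ε+1)) ≤ δ' := by
  classical
  set E := Real.exp ε with hEdef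
  have hE1 : 1 < E := by rw [hEdef, ← Real.exp_zero]; exact Real.exp_lt_exp.mpr hε
  set L := Real.log (1/δ') with hLdef
  have hL0 : 0 < L := by
    rw [hLdef]; apply Real.log_pos; rw [lt_div_iff₀ hδ0]; linarith
  have hm0 : (0:ℝ) < m := by
    have : (1:ℝ) ≤ m := by exact_mod_cast hm
    linarith
  set s := Real.sqrt (2*m*L) with hsdef
  have hs0 : 0 ≤ s := Real.sqrt_nonneg _
  have hs2 : s^2 = 2*m*L := Real.sq_sqrt (by positivity)
  set μ0 := s/m with hμ0def
  have hμ0 : 0 ≤ μ0 := div_nonneg hs0 hm0.le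
  have hmne : (m:ℝ) ≠ 0 := ne_of_gt hm0
  clear_value s L
  clear_value μ0
  set θ := (E-1)/(E+1) with hθdef
  have hθ0 : 0 ≤ θ := by rw [hθdef]; apply div_nonneg <;> linarith
  have hθle : θ ≤ E - 1 := by
    rw [hθdef, div_le_iff₀ (by linarith : (0:ℝ) < E + 1)]
    nlinarith
  set a := E/(E+1) with hadef
  set q := 1/(E+1) with hqdef
  have ha0 : 0 < a := by positivity
  have hq0 : 0 < q := by positivity
  set Z : (Fin m → Bool) → ℕ := fun c => (Finset.univ.filter (fun i => c i = true)).card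
    with hZdef
  -- step A: pointwise bound by Chernoff weight
  have hstepA : ∀ c ∈ Finset.univ.filter (fun c : Fin m → Bool =>
      ¬ (((m:ℝ) - 2*(Z c : ℝ)) * ε ≤ s * ε + m*ε*(E - 1))),
      (∏ i, bif c i then q else a)
        ≤ Real.exp (-μ0*(s + m*(E-1))) * (∏ i, bif c i then Real.exp (-μ0) * q
            else Real.exp μ0 * a) := by
    intro c hc
    rw [Finset.mem_filter] at hc
    have hbad : s * ε + m*ε*(E - 1) < ((m:ℝ) - 2*(Z c : ℝ)) * ε := lt_of_not_ge hc.2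
    have hbad' : s + m*(E-1) < (m:ℝ) - 2*(Z c : ℝ) := by
      have := lt_of_mul_lt_mul_right (by nlinarith : (s + m*(E-1)) * ε < ((m:ℝ) - 2*(Z c:ℝ)) * ε) hε.le
      exact this
    have hZm : Z c ≤ m := card_filter_le_m c
    have hcast : ((m - Z c : ℕ):ℝ) = (m:ℝ) - (Z c:ℝ) := by rw [Nat.cast_sub hZm]
    rw [prod_cond_pow, prod_cond_pow]
    have hrhs : (Real.exp (-μ0) * q) ^ (Z c) * (Real.exp μ0 * a) ^ (m - Z c)
        = Real.exp (μ0 * ((m:ℝ) - 2*(Z c:ℝ))) * (q ^ (Z c) * a ^ (m - Z c)) := by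
      rw [mul_pow, mul_pow, ← Real.exp_nat_mul, ← Real.exp_nat_mul, hcast]
      rw [show Real.exp ((Z c:ℝ) * -μ0) * q ^ Z c * (Real.exp (((m:ℝ) - (Z c:ℝ)) * μ0) * a ^ (m - Z c))
          = (Real.exp ((Z c:ℝ) * -μ0) * Real.exp (((m:ℝ) - (Z c:ℝ)) * μ0)) * (q ^ Z c * a ^ (m - Z c)) by ring,
        ← Real.exp_add]
      congr 2
      ring
    rw [hrhs, ← mul_assoc, ← Real.exp_add]
    have hfac : (1:ℝ) ≤ Real.exp (-μ0*(s + m*(E-1)) + μ0 * ((m:ℝ) - 2*(Z c:ℝ))) := by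
      have h5 := Real.exp_le_exp.mpr (show (0:ℝ) ≤ -μ0*(s + m*(E-1)) + μ0 * ((m:ℝ) - 2*(Z c:ℝ)) by nlinarith)
      rwa [Real.exp_zero] at h5
    nlinarith [pow_nonneg hq0.le (Z c), pow_nonneg ha0.le (m - Z c),
      mul_nonneg (pow_nonneg hq0.le (Z c)) (pow_nonneg ha0.le (m - Z c))]
  have hsum1 := Finset.sum_le_sum hstepA
  -- step B: extend to full sum
  have hstepB : ∑ c ∈ Finset.univ.filter (fun c : Fin m → Bool =>
        ¬ (((m:ℝ) - 2*(Z c : ℝ)) * ε ≤ s * ε + m*ε*(E - 1))),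
        (Real.exp (-μ0*(s + m*(E-1))) * (∏ i, bif c i then Real.exp (-μ0) * q
            else Real.exp μ0 * a))
      ≤ ∑ c : Fin m → Bool, (Real.exp (-μ0*(s + m*(E-1))) * (∏ i, bif c i then Real.exp (-μ0) * q
            else Real.exp μ0 * a)) := by
    apply Finset.sum_le_sum_of_subset_of_nonneg (Finset.filter_subset _ _)
    intro c _ _
    apply mul_nonneg (Real.exp_pos _).le
    apply Finset.prod_nonneg
    intro i _
    cases c i <;> simp <;> positivity
  -- step C: compute the full sum
  have hstepC : ∑ c : Fin m → Bool, (Real.exp (-μ0*(s + m*(E-1))) * (∏ i, bif c i then Real.exp (-μ0) * q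
          else Real.exp μ0 * a))
      = Real.exp (-μ0*(s + m*(E-1))) * (Real.exp μ0 * a + Real.exp (-μ0) * q)^m := by
    rw [← Finset.mul_sum]
    congr 1
    have := sum_prod_bool m (fun b => bif b then Real.exp (-μ0) * q else Real.exp μ0 * a)
    simpa using this
  -- step D: Hoeffding bound
  have hE1' : E + 1 ≠ 0 := by linarith
  have hDa : a = (1+θ)/2 := by
    rw [hadef, hθdef]; field_simp; ring
  have hDq : q = (1-θ)/2 := by
    rw [hqdef, hθdef]; field_simp; ring
  have hhoef : Real.exp μ0 * a + Real.exp (-μ0) * q ≤ Real.exp (θ*μ0 + μ0^2/2) := by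
    rw [hDa, hDq]
    have := twopoint_hoeffding hθ0 hμ0
    linarith
  have hpow : (Real.exp μ0 * a + Real.exp (-μ0) * q)^m ≤ (Real.exp (θ*μ0 + μ0^2/2))^m := by
    apply pow_le_pow_left₀ (by positivity) hhoef
  -- step E: final computation
  have hfinal : Real.exp (-μ0*(s + m*(E-1))) * (Real.exp (θ*μ0 + μ0^2/2))^m ≤ δ' := by
    rw [← Real.exp_nat_mul, ← Real.exp_add]
    have hexp : -μ0*(s + m*(E-1)) + (m:ℝ) * (θ*μ0 + μ0^2/2) ≤ -L := by
      have h1 : (m:ℝ) * (θ*μ0) ≤ (m:ℝ) * ((E-1)*μ0) := by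
        apply mul_le_mul_of_nonneg_left _ hm0.le
        exact mul_le_mul_of_nonneg_right hθle hμ0
      have h2 : (m:ℝ) * (μ0^2/2) = s^2/(2*m) := by
        rw [hμ0def, div_pow]; field_simp
      have h3 : μ0 * s = s^2/m := by rw [hμ0def]; ring
      have h4 : s^2/(2*m) = L := by rw [hs2]; field_simp
      have h5 : μ0 * s = 2*L := by rw [h3, hs2]; field_simp
      have h6 : (m:ℝ)*(μ0^2/2) = L := h2.trans h4
      nlinarith
    calc Real.exp (-μ0*(s + m*(E-1)) + (m:ℝ)*(θ*μ0 + μ0^2/2)) ≤ Real.exp (-L) :=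
          Real.exp_le_exp.mpr hexp
      _ = δ' := by
          rw [hLdef, one_div, Real.log_inv, neg_neg, Real.exp_log hδ0]
  calc ∑ c ∈ Finset.univ.filter (fun c : Fin m → Bool =>
        ¬ (((m:ℝ) - 2*(Z c : ℝ)) * ε ≤ s * ε + m*ε*(E - 1))),
        (∏ i, bif c i then q else a)
      ≤ _ := hsum1
    _ ≤ _ := hstepB
    _ = _ := hstepC
    _ ≤ Real.exp (-μ0*(s + m*(E-1))) * (Real.exp (θ*μ0 + μ0^2/2))^m := by
        apply mul_le_mul_of_nonneg_left hpow (Real.exp_pos _).le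
    _ ≤ δ' := hfinal

lemma ofReal_prod_of_nonneg' {ι : Type*} (s : Finset ι) (f : ι → ℝ)
    (h : ∀ i ∈ s, 0 ≤ f i) :
    ENNReal.ofReal (∏ i ∈ s, f i) = ∏ i ∈ s, ENNReal.ofReal (f i) := by
  classical
  induction s using Finset.induction with
  | empty => simp
  | @insert x s hx ih =>
    rw [Finset.prod_insert hx, Finset.prod_insert hx,
      ENNReal.ofReal_mul (h x (Finset.mem_insert_self _ _)),
      ih (fun i hi => h i (Finset.mem_insert_of_mem hi))]

/-- Advanced composition (Dwork–Rothblum–Vadhan): the sequential (adaptive) composition of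
`m` mechanisms, each of which is `ε`-DP for every fixed tuple of previous outcomes, is
`(ε', δ')`-DP for every `δ' > 0`, where `ε' = √(2·m·log(1/δ'))·ε + m·ε·(e^ε − 1)`. -/
theorem advanced_composition (Ω : Type) (N : Ω → Ω → Prop) (hsym : ∀ X X', N X X' → N X' X)
    (m : ℕ) (hm : 1 ≤ m) (ε : ℝ) (hε : 0 < ε) (O : ℕ → Type) [∀ i, MeasurableSpace (O i)]
    (M : (i : ℕ) → Ω → ((j : Fin i) → O j) → Measure (O i))
    (hprob : ∀ i, i < m → ∀ X o, IsProbabilityMeasure (M i X o))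
    (hmeas : ∀ i, i < m → ∀ X, Measurable fun o => M i X o)
    (hDP : ∀ i, i < m → ∀ o, IsDP N (fun X => M i X o) ε 0) :
    ∀ δ' : ℝ, 0 < δ' →
      IsDP N (fun X => seqCompose O (fun i o => M i X o) m)
        (Real.sqrt (2 * m * Real.log (1 / δ')) * ε + m * ε * (Real.exp ε - 1)) δ' := by
  intro δ' hδ' X X' hN S hS
  show seqCompose O (fun i o => M i X o) m S
    ≤ ENNReal.ofReal (Real.exp (Real.sqrt (2 * m * Real.log (1 / δ')) * ε
        + m * ε * (Real.exp ε - 1))) * seqCompose O (fun i o => M i X' o) m S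
      + ENNReal.ofReal δ'
  classical
  by_cases hδ1 : 1 ≤ δ'
  · haveI : IsProbabilityMeasure (seqCompose O (fun i o => M i X o) m) :=
      isProb_seqCompose _ m (fun i hi => hmeas i hi X) (fun i hi o => hprob i hi X o)
    calc seqCompose O (fun i o => M i X o) m S ≤ 1 := prob_le_one
      _ ≤ ENNReal.ofReal δ' := by
          rw [← ENNReal.ofReal_one]; exact ENNReal.ofReal_le_ofReal hδ1
      _ ≤ _ := le_add_self
  · push_neg at hδ1
    have hE1 : 1 < Real.exp ε := by
      rw [← Real.exp_zero]; exact Real.exp_lt_exp.mpr hε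
    -- DP inequalities for single steps
    have hDPle : ∀ i, i < m → ∀ o (T : Set (O i)), MeasurableSet T →
        M i X o T ≤ ENNReal.ofReal (Real.exp ε) * M i X' o T := by
      intro i hi o T hT
      have h := hDP i hi o X X' hN T hT
      simpa using h
    have hDPle' : ∀ i, i < m → ∀ o (T : Set (O i)), MeasurableSet T →
        M i X' o T ≤ ENNReal.ofReal (Real.exp ε) * M i X o T := by
      intro i hi o T hT
      have h := hDP i hi o X' X (hsym X X' hN) T hT
      simpa using h
    -- the two branch kernels
    set kerA : (i : ℕ) → ((j : Fin i) → O j) → Measure (O i) :=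
      fun i o => (ENNReal.ofReal (Real.exp ε - 1))⁻¹ •
        (ENNReal.ofReal (Real.exp ε) • M i X o - M i X' o) with hkerAdef
    set kerB : (i : ℕ) → ((j : Fin i) → O j) → Measure (O i) :=
      fun i o => (ENNReal.ofReal (Real.exp ε - 1))⁻¹ •
        (ENNReal.ofReal (Real.exp ε) • M i X' o - M i X o) with hkerBdef
    have hprobA : ∀ i, i < m → ∀ o, IsProbabilityMeasure (kerA i o) := by
      intro i hi o
      haveI := hprob i hi X o; haveI := hprob i hi X' o
      exact decomp_prob hE1 (fun T hT => hDPle' i hi o T hT)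
    have hprobB : ∀ i, i < m → ∀ o, IsProbabilityMeasure (kerB i o) := by
      intro i hi o
      haveI := hprob i hi X o; haveI := hprob i hi X' o
      exact decomp_prob hE1 (fun T hT => hDPle i hi o T hT)
    have hmeasA : ∀ i, i < m → Measurable (kerA i) := by
      intro i hi
      apply Measure.measurable_of_measurable_coe
      intro T hT
      have heval : ∀ o, kerA i o T = ENNReal.ofReal ((Real.exp ε - 1)⁻¹ *
          (Real.exp ε * (M i X o T).toReal - (M i X' o T).toReal)) := by
        intro o
        haveI := hprob i hi X o; haveI := hprob i hi X' o
        exact decomp_apply hE1 (fun T' hT' => hDPle' i hi o T' hT') hT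
      simp only [heval]
      apply ENNReal.measurable_ofReal.comp
      apply Measurable.const_mul
      apply Measurable.sub
      · exact (ENNReal.measurable_toReal.comp
          ((Measure.measurable_coe hT).comp (hmeas i hi X))).const_mul _
      · exact ENNReal.measurable_toReal.comp ((Measure.measurable_coe hT).comp (hmeas i hi X'))
    have hmeasB : ∀ i, i < m → Measurable (kerB i) := by
      intro i hi
      apply Measure.measurable_of_measurable_coe
      intro T hT
      have heval : ∀ o, kerB i o T = ENNReal.ofReal ((Real.exp ε - 1)⁻¹ *
          (Real.exp ε * (M i X' o T).toReal - (M i X o T).toReal)) := by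
        intro o
        haveI := hprob i hi X o; haveI := hprob i hi X' o
        exact decomp_apply hE1 (fun T' hT' => hDPle i hi o T' hT') hT
      simp only [heval]
      apply ENNReal.measurable_ofReal.comp
      apply Measurable.const_mul
      apply Measurable.sub
      · exact (ENNReal.measurable_toReal.comp
          ((Measure.measurable_coe hT).comp (hmeas i hi X'))).const_mul _
      · exact ENNReal.measurable_toReal.comp ((Measure.measurable_coe hT).comp (hmeas i hi X))
    have hdecX : ∀ i, i < m → ∀ o, M i X o
        = ENNReal.ofReal (Real.exp ε/(Real.exp ε+1)) • kerA i o
          + ENNReal.ofReal (1/(Real.exp ε+1)) • kerB i o := by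
      intro i hi o
      haveI := hprob i hi X o; haveI := hprob i hi X' o
      exact (decomp_mix hE1 (fun T hT => hDPle i hi o T hT)
        (fun T hT => hDPle' i hi o T hT)).symm
    have hdecX' : ∀ i, i < m → ∀ o, M i X' o
        = ENNReal.ofReal (1/(Real.exp ε+1)) • kerA i o
          + ENNReal.ofReal (Real.exp ε/(Real.exp ε+1)) • kerB i o := by
      intro i hi o
      haveI := hprob i hi X o; haveI := hprob i hi X' o
      have h := decomp_mix hE1 (fun T hT => hDPle' i hi o T hT)
        (fun T hT => hDPle i hi o T hT)
      exact h.symm.trans (add_comm _ _)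
    obtain ⟨ν, hν, hPmix, hQmix⟩ := mixture kerA kerB m
      (fun i o => M i X o) (fun i o => M i X' o)
      (ENNReal.ofReal (Real.exp ε/(Real.exp ε+1))) (ENNReal.ofReal (1/(Real.exp ε+1)))
      (ENNReal.ofReal (1/(Real.exp ε+1))) (ENNReal.ofReal (Real.exp ε/(Real.exp ε+1)))
      hdecX hdecX' hprobA hprobB hmeasA hmeasB
    rw [hPmix, hQmix, Measure.finset_sum_apply, Measure.finset_sum_apply]
    simp only [Measure.smul_apply, smul_eq_mul]
    have hWconv : ∀ c : Fin m → Bool,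
        (∏ i, bif c i then ENNReal.ofReal (1/(Real.exp ε+1))
            else ENNReal.ofReal (Real.exp ε/(Real.exp ε+1)))
        = ENNReal.ofReal (∏ i, bif c i then 1/(Real.exp ε+1)
            else Real.exp ε/(Real.exp ε+1)) := by
      intro c
      rw [ofReal_prod_of_nonneg' _ _ (fun i _ => by cases c i <;> simp <;> positivity)]
      refine Finset.prod_congr rfl (fun i _ => ?_)
      cases c i <;> simp
    have hW'conv : ∀ c : Fin m → Bool,
        (∏ i, bif c i then ENNReal.ofReal (Real.exp ε/(Real.exp ε+1))
            else ENNReal.ofReal (1/(Real.exp ε+1)))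
        = ENNReal.ofReal (∏ i, bif c i then Real.exp ε/(Real.exp ε+1)
            else 1/(Real.exp ε+1)) := by
      intro c
      rw [ofReal_prod_of_nonneg' _ _ (fun i _ => by cases c i <;> simp <;> positivity)]
      refine Finset.prod_congr rfl (fun i _ => ?_)
      cases c i <;> simp
    set goodP : (Fin m → Bool) → Prop := fun c =>
      (((m:ℝ) - 2*((Finset.univ.filter (fun i => c i = true)).card : ℝ)) * ε
        ≤ Real.sqrt (2*m*Real.log (1/δ')) * ε + m*ε*(Real.exp ε - 1)) with hgoodPdef
    have hsplit := Finset.sum_filter_add_sum_filter_not Finset.univ goodP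
      (fun c : Fin m → Bool =>
        (∏ i, bif c i then ENNReal.ofReal (1/(Real.exp ε+1))
            else ENNReal.ofReal (Real.exp ε/(Real.exp ε+1))) * ν c S)
    have hgood : ∑ c ∈ Finset.univ.filter goodP,
        (∏ i, bif c i then ENNReal.ofReal (1/(Real.exp ε+1))
            else ENNReal.ofReal (Real.exp ε/(Real.exp ε+1))) * ν c S
        ≤ ENNReal.ofReal (Real.exp (Real.sqrt (2*m*Real.log (1/δ')) * ε
            + m*ε*(Real.exp ε - 1))) * ∑ c : Fin m → Bool,
          (∏ i, bif c i then ENNReal.ofReal (Real.exp ε/(Real.exp ε+1))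
            else ENNReal.ofReal (1/(Real.exp ε+1))) * ν c S := by
      calc ∑ c ∈ Finset.univ.filter goodP,
          (∏ i, bif c i then ENNReal.ofReal (1/(Real.exp ε+1))
              else ENNReal.ofReal (Real.exp ε/(Real.exp ε+1))) * ν c S
          ≤ ∑ c ∈ Finset.univ.filter goodP,
            (ENNReal.ofReal (Real.exp (Real.sqrt (2*m*Real.log (1/δ')) * ε
                + m*ε*(Real.exp ε - 1))) *
              (∏ i, bif c i then ENNReal.ofReal (Real.exp ε/(Real.exp ε+1))
                else ENNReal.ofReal (1/(Real.exp ε+1)))) * ν c S := by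
            apply Finset.sum_le_sum
            intro c hc
            apply mul_le_mul_left
            rw [hWconv c, hW'conv c, ← ENNReal.ofReal_mul (Real.exp_pos _).le]
            apply ENNReal.ofReal_le_ofReal
            exact good_bound hε c (Finset.mem_filter.mp hc).2
        _ = ENNReal.ofReal (Real.exp (Real.sqrt (2*m*Real.log (1/δ')) * ε
              + m*ε*(Real.exp ε - 1))) * ∑ c ∈ Finset.univ.filter goodP,
            (∏ i, bif c i then ENNReal.ofReal (Real.exp ε/(Real.exp ε+1))
              else ENNReal.ofReal (1/(Real.exp ε+1))) * ν c S := by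
            rw [Finset.mul_sum]
            exact Finset.sum_congr rfl (fun c _ => by ring)
        _ ≤ _ := by
            apply mul_le_mul_right
            exact Finset.sum_le_sum_of_subset (Finset.filter_subset _ _)
    have hbad : ∑ c ∈ Finset.univ.filter (fun c => ¬ goodP c),
        (∏ i, bif c i then ENNReal.ofReal (1/(Real.exp ε+1))
            else ENNReal.ofReal (Real.exp ε/(Real.exp ε+1))) * ν c S
        ≤ ENNReal.ofReal δ' := by
      calc ∑ c ∈ Finset.univ.filter (fun c => ¬ goodP c),
          (∏ i, bif c i then ENNReal.ofReal (1/(Real.exp ε+1))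
              else ENNReal.ofReal (Real.exp ε/(Real.exp ε+1))) * ν c S
          ≤ ∑ c ∈ Finset.univ.filter (fun c => ¬ goodP c),
            (∏ i, bif c i then ENNReal.ofReal (1/(Real.exp ε+1))
              else ENNReal.ofReal (Real.exp ε/(Real.exp ε+1))) := by
            apply Finset.sum_le_sum
            intro c _
            haveI := hν c
            calc (∏ i, bif c i then ENNReal.ofReal (1/(Real.exp ε+1))
                  else ENNReal.ofReal (Real.exp ε/(Real.exp ε+1))) * ν c S
                ≤ (∏ i, bif c i then ENNReal.ofReal (1/(Real.exp ε+1))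
                  else ENNReal.ofReal (Real.exp ε/(Real.exp ε+1))) * 1 :=
                  mul_le_mul_right prob_le_one _
              _ = _ := mul_one _
        _ = ENNReal.ofReal (∑ c ∈ Finset.univ.filter (fun c => ¬ goodP c),
              (∏ i, bif c i then 1/(Real.exp ε+1) else Real.exp ε/(Real.exp ε+1))) := by
            rw [ENNReal.ofReal_sum_of_nonneg (fun c _ => Finset.prod_nonneg
              (fun i _ => by cases c i <;> simp <;> positivity))]
            exact Finset.sum_congr rfl (fun c _ => hWconv c)
        _ ≤ ENNReal.ofReal δ' :=
            ENNReal.ofReal_le_ofReal (chernoff_bad_sum m hm hε hδ' hδ1)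
    exact le_trans (le_of_eq hsplit.symm) (add_le_add hgood hbad)
end
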